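/- arXiv:0804.0671 — 5 statements merged into one kernel-verified Lean document; each statement's English description precedes it below -/
import Mathlib

section
/- If R is reversible with respect to f_Y, i.e. ∫_A R(y,B) f_Y(y) μ_y(dy) = ∫_B R(y,A) f_Y(y) μ_y(dy) for all measurable A, B ⊆ Y, then p_R is reversible with respect to f_X: p_R(x|x') f_X(x') = p_R(x'|x) f_X(x) for all x, x' ∈ X. -/
open MeasureTheory ProbabilityTheory
open scoped ENNReal

/-- If `R` is reversible with respect to `f_Y`, then `p_R` is reversible with respect
to `f_X`: `p_R(x|x') f_X(x') = p_R(x'|x) f_X(x)` for all `x, x'`. -/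
theorem pR_reversible_of_R_reversible
    {X Y : Type*}
    [MetricSpace X] [TopologicalSpace.SeparableSpace X] [LocallyCompactSpace X]
    [MeasurableSpace X] [BorelSpace X]
    [MetricSpace Y] [TopologicalSpace.SeparableSpace Y] [LocallyCompactSpace Y]
    [MeasurableSpace Y] [BorelSpace Y]
    (μx : Measure X) (μy : Measure Y) [SigmaFinite μx] [SigmaFinite μy]
    (f : X → Y → ℝ)
    (hf_meas : Measurable (Function.uncurry f))
    (hf_nonneg : ∀ x y, 0 ≤ f x y)
    (hf_prob : ∫ q, f q.1 q.2 ∂(μx.prod μy) = 1)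
    (fX : X → ℝ) (hfX : ∀ x, fX x = ∫ y, f x y ∂μy)
    (fY : Y → ℝ) (hfY : ∀ y, fY y = ∫ x, f x y ∂μx)
    (hfX_pos : ∀ x, 0 < fX x) (hfY_pos : ∀ y, 0 < fY y)
    (fXY : X → Y → ℝ) (hfXY : ∀ x y, fXY x y = f x y / fY y)
    (fYX : Y → X → ℝ) (hfYX : ∀ y x, fYX y x = f x y / fX x)
    (R : Kernel Y Y) [IsMarkovKernel R]
    (hR_inv : ∀ A : Set Y, MeasurableSet A →
      ∫ y, ((R y) A).toReal * fY y ∂μy = ∫ y in A, fY y ∂μy)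
    (hR_rev : ∀ A B : Set Y, MeasurableSet A → MeasurableSet B →
      ∫ y in A, ((R y) B).toReal * fY y ∂μy = ∫ y in B, ((R y) A).toReal * fY y ∂μy)
    (pR : X → X → ℝ)
    (hpR : ∀ x x', pR x x' = ∫ y, (∫ y', fXY x y' ∂(R y)) * fYX y x' ∂μy) :
    ∀ x x', pR x x' * fX x' = pR x' x * fX x := by
  classical
  -- measurability of slices and marginals
  have hfx_meas : ∀ x, Measurable (f x) := fun x => hf_meas.comp measurable_prodMk_left
  have hfy_meas : ∀ y, Measurable (fun x => f x y) := fun y =>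
    hf_meas.comp measurable_prodMk_right
  have hfY_eq : fY = fun y => ∫ x, f x y ∂μx := funext hfY
  have hfY_meas : Measurable fY := by
    rw [hfY_eq]
    exact (hf_meas.stronglyMeasurable.integral_prod_left).measurable
  -- integrability of slices
  have hfint_x : ∀ x, Integrable (f x) μy := by
    intro x
    by_contra h
    have h2 := hfX x
    rw [integral_undef h] at h2
    have := hfX_pos x; linarith
  have hfint_y : ∀ y, Integrable (fun x => f x y) μx := by
    intro y
    by_contra h
    have h2 := hfY y
    rw [integral_undef h] at h2
    have := hfY_pos y; linarith
  -- the density w and the measure π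
  set w : Y → ℝ≥0∞ := fun y => ENNReal.ofReal (fY y) with hw
  have hw_meas : Measurable w := hfY_meas.ennreal_ofReal
  have hw_ne : ∀ y, w y ≠ 0 := fun y =>
    (ENNReal.ofReal_pos.mpr (hfY_pos y)).ne'
  set π : Measure Y := μy.withDensity w with hπ
  have hf_int : Integrable (fun q : X × Y => f q.1 q.2) (μx.prod μy) := by
    by_contra h
    rw [integral_undef h] at hf_prob
    norm_num at hf_prob
  have hw_one : ∫⁻ y, w y ∂μy = 1 := by
    have h1 : ENNReal.ofReal (∫ q, (fun q : X × Y => f q.1 q.2) q ∂(μx.prod μy)) =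
        ∫⁻ q : X × Y, ENNReal.ofReal (f q.1 q.2) ∂(μx.prod μy) :=
      ofReal_integral_eq_lintegral_ofReal hf_int
        (Filter.Eventually.of_forall fun q => hf_nonneg _ _)
    rw [hf_prob, ENNReal.ofReal_one] at h1
    have h2 : ∫⁻ q : X × Y, ENNReal.ofReal (f q.1 q.2) ∂(μx.prod μy)
        = ∫⁻ y, ∫⁻ x, ENNReal.ofReal (f x y) ∂μx ∂μy :=
      lintegral_prod_symm _ hf_meas.ennreal_ofReal.aemeasurable
    have h3 : ∀ y, ∫⁻ x, ENNReal.ofReal (f x y) ∂μx = w y := by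
      intro y
      rw [hw]
      simp only [hfY y]
      exact (ofReal_integral_eq_lintegral_ofReal (hfint_y y)
        (Filter.Eventually.of_forall fun x => hf_nonneg _ _)).symm
    rw [h2] at h1
    simp_rw [h3] at h1
    exact h1.symm
  have hπ_fin : IsFiniteMeasure π := by
    constructor
    rw [hπ, withDensity_apply _ MeasurableSet.univ, Measure.restrict_univ, hw_one]
    exact ENNReal.one_lt_top
  -- fY is integrable
  have hfY_int : Integrable fY μy := by
    refine ⟨hfY_meas.aestronglyMeasurable, ?_⟩
    rw [hasFiniteIntegral_iff_ofReal (Filter.Eventually.of_forall fun y => (hfY_pos y).le)]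
    rw [show (fun y => ENNReal.ofReal (fY y)) = w from rfl, hw_one]
    exact ENNReal.one_lt_top
  -- convert reversibility hypothesis to lintegrals wrt π
  have lem : ∀ A B : Set Y, MeasurableSet A → MeasurableSet B →
      ∫⁻ y in A, (R y) B ∂π = ENNReal.ofReal (∫ y in A, ((R y) B).toReal * fY y ∂μy) := by
    intro A B hA hB
    have hi : Integrable (fun y => ((R y) B).toReal * fY y) (μy.restrict A) := by
      refine Integrable.mono' (hfY_int.restrict)
        (((Kernel.measurable_coe R hB).ennreal_toReal.mul hfY_meas).aestronglyMeasurable)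
        (Filter.Eventually.of_forall fun y => ?_)
      have h1 : ((R y) B).toReal ≤ 1 := by
        have := prob_le_one (μ := R y) (s := B)
        calc ((R y) B).toReal ≤ (1 : ℝ≥0∞).toReal := ENNReal.toReal_mono ENNReal.one_ne_top this
          _ = 1 := by simp
      have h2 : 0 ≤ ((R y) B).toReal * fY y :=
        mul_nonneg ENNReal.toReal_nonneg (hfY_pos y).le
      rw [Real.norm_of_nonneg h2]
      nlinarith [(hfY_pos y).le]
    rw [ofReal_integral_eq_lintegral_ofReal hi (Filter.Eventually.of_forall fun y =>
      mul_nonneg ENNReal.toReal_nonneg (hfY_pos y).le)]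
    rw [hπ, restrict_withDensity hA,
      lintegral_withDensity_eq_lintegral_mul _ hw_meas (Kernel.measurable_coe R hB)]
    refine lintegral_congr fun y => ?_
    simp only [Pi.mul_apply]
    rw [ENNReal.ofReal_mul ENNReal.toReal_nonneg,
      ENNReal.ofReal_toReal (measure_ne_top (R y) B), mul_comm]
  have rev' : ∀ A B : Set Y, MeasurableSet A → MeasurableSet B →
      ∫⁻ y in A, (R y) B ∂π = ∫⁻ y in B, (R y) A ∂π := by
    intro A B hA hB
    rw [lem A B hA hB, lem B A hB hA, hR_rev A B hA hB]
  haveI := hπ_fin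
  haveI : SFinite π := inferInstance
  -- the joint measure and its swap
  have heq : (π.compProd R) = (π.compProd R).map Prod.swap := by
    haveI : IsFiniteMeasure (π.compProd R) := by
      constructor
      rw [Measure.compProd_apply MeasurableSet.univ]
      simp only [Set.preimage_univ, measure_univ, lintegral_one]
      exact hπ_fin.measure_univ_lt_top
    refine ext_of_generate_finite _ generateFrom_prod.symm isPiSystem_prod ?_ ?_
    · rintro s ⟨A, hA, B, hB, rfl⟩
      simp only [Set.mem_setOf_eq] at hA hB
      rw [Measure.compProd_apply_prod hA hB,
        Measure.map_apply measurable_swap (hA.prod hB)]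
      have hsw : Prod.swap ⁻¹' (A ×ˢ B) = B ×ˢ A := by
        ext p; simp [Set.mem_prod, and_comm]
      rw [hsw, Measure.compProd_apply_prod hB hA, rev' A B hA hB]
    · rw [Measure.map_apply measurable_swap MeasurableSet.univ]
      simp
  -- the key symmetry for lintegrals
  have key : ∀ φ ψ : Y → ℝ≥0∞, Measurable φ → Measurable ψ →
      ∫⁻ y, (∫⁻ y', φ y' ∂(R y)) * ψ y ∂π = ∫⁻ y, (∫⁻ y', ψ y' ∂(R y)) * φ y ∂π := by
    intro φ ψ hφ hψ
    have h1 : ∫⁻ y, (∫⁻ y', φ y' ∂(R y)) * ψ y ∂π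
        = ∫⁻ p : Y × Y, ψ p.1 * φ p.2 ∂(π.compProd R) := by
      rw [Measure.lintegral_compProd
        (show Measurable fun p : Y × Y => ψ p.1 * φ p.2 from
          (hψ.comp measurable_fst).mul (hφ.comp measurable_snd))]
      refine lintegral_congr fun y => ?_
      dsimp only
      rw [lintegral_const_mul _ hφ, mul_comm]
    have h2 : ∫⁻ y, (∫⁻ y', ψ y' ∂(R y)) * φ y ∂π
        = ∫⁻ p : Y × Y, φ p.1 * ψ p.2 ∂(π.compProd R) := by
      rw [Measure.lintegral_compProd
        (show Measurable fun p : Y × Y => φ p.1 * ψ p.2 from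
          (hφ.comp measurable_fst).mul (hψ.comp measurable_snd))]
      refine lintegral_congr fun y => ?_
      dsimp only
      rw [lintegral_const_mul _ hψ, mul_comm]
    rw [h1, h2]
    conv_lhs => rw [heq]
    rw [lintegral_map
      (show Measurable fun p : Y × Y => ψ p.1 * φ p.2 from
        (hψ.comp measurable_fst).mul (hφ.comp measurable_snd)) measurable_swap]
    refine lintegral_congr fun p => ?_
    simp [mul_comm]
  -- the conditional density in ℝ≥0∞
  set Φ : X → Y → ℝ≥0∞ := fun x y => ENNReal.ofReal (f x y / fY y) with hΦ
  have hΦ_meas : ∀ x, Measurable (Φ x) := fun x =>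
    ((hfx_meas x).div hfY_meas).ennreal_ofReal
  have hΦw : ∀ x y, Φ x y * w y = ENNReal.ofReal (f x y) := by
    intro x y
    rw [hΦ, hw]
    rw [← ENNReal.ofReal_mul (div_nonneg (hf_nonneg x y) (hfY_pos y).le)]
    rw [div_mul_cancel₀ _ (hfY_pos y).ne']
  have hΦint : ∀ x, ∫⁻ y, Φ x y ∂π = ENNReal.ofReal (fX x) := by
    intro x
    rw [hπ, lintegral_withDensity_eq_lintegral_mul _ hw_meas (hΦ_meas x)]
    have : ∀ y, (w * Φ x) y = ENNReal.ofReal (f x y) := fun y => by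
      rw [Pi.mul_apply, mul_comm]; exact hΦw x y
    simp_rw [this]
    rw [hfX x]
    exact (ofReal_integral_eq_lintegral_ofReal (hfint_x x)
      (Filter.Eventually.of_forall fun y => hf_nonneg x y)).symm
  -- the inner lintegral G
  set G : X → Y → ℝ≥0∞ := fun x y => ∫⁻ y', Φ x y' ∂(R y) with hG
  have hG_meas : ∀ x, Measurable (G x) := fun x => (hΦ_meas x).lintegral_kernel
  have hGtot : ∀ x, ∫⁻ y, G x y ∂π = ENNReal.ofReal (fX x) := by
    intro x
    have := key (Φ x) (fun _ => 1) (hΦ_meas x) measurable_const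
    simp only [lintegral_one, measure_univ, one_mul, mul_one] at this
    rw [← hΦint x, ← this]
  have hGfin : ∀ x, ∀ᵐ y ∂μy, G x y ≠ ∞ := by
    intro x
    have h1 : ∀ᵐ y ∂π, G x y < ∞ := by
      refine ae_lt_top (hG_meas x) ?_
      rw [hGtot x]; exact ENNReal.ofReal_ne_top
    rw [hπ, ae_withDensity_iff hw_meas] at h1
    filter_upwards [h1] with y hy
    exact (hy (hw_ne y)).ne
  -- the Bochner inner integral equals (G x y).toReal
  have hinner : ∀ x y, ∫ y', fXY x y' ∂(R y) = (G x y).toReal := by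
    intro x y
    have hm : AEStronglyMeasurable (fXY x) (R y) := by
      have : fXY x = fun y' => f x y' / fY y' := funext fun y' => hfXY x y'
      rw [this]
      exact ((hfx_meas x).div hfY_meas).aestronglyMeasurable
    rw [integral_eq_lintegral_of_nonneg_ae
      (Filter.Eventually.of_forall fun y' => by
        rw [hfXY]; exact div_nonneg (hf_nonneg x y') (hfY_pos y').le) hm]
    congr 1
    refine lintegral_congr fun y' => ?_
    rw [hfXY]
  -- main computation: pR x x' * fX x' = (∫⁻ y, G x y * Φ x' y ∂π).toReal
  have claim : ∀ x x', pR x x' * fX x' = (∫⁻ y, G x y * Φ x' y ∂π).toReal := by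
    intro x x'
    have e1 : pR x x' * fX x' = ∫ y, (G x y).toReal * f x' y ∂μy := by
      rw [hpR x x', ← integral_mul_const]
      refine integral_congr_ae (Filter.Eventually.of_forall fun y => ?_)
      show (∫ y', fXY x y' ∂(R y)) * fYX y x' * fX x' = (G x y).toReal * f x' y
      rw [hinner x y, hfYX, mul_assoc, div_mul_cancel₀ _ (hfX_pos x').ne']
    rw [e1, integral_eq_lintegral_of_nonneg_ae
      (Filter.Eventually.of_forall fun y =>
        mul_nonneg ENNReal.toReal_nonneg (hf_nonneg x' y))
      (((hG_meas x).ennreal_toReal.mul (hfx_meas x')).aestronglyMeasurable)]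
    congr 1
    have e2 : ∀ᵐ y ∂μy, ENNReal.ofReal ((G x y).toReal * f x' y)
        = G x y * (Φ x' y * w y) := by
      filter_upwards [hGfin x] with y hy
      rw [ENNReal.ofReal_mul ENNReal.toReal_nonneg, ENNReal.ofReal_toReal hy, hΦw x' y]
    rw [lintegral_congr_ae e2]
    rw [hπ, lintegral_withDensity_eq_lintegral_mul _ hw_meas (g := fun y => G x y * Φ x' y) ((hG_meas x).mul (hΦ_meas x'))]
    refine lintegral_congr fun y => ?_
    simp only [Pi.mul_apply]
    ring
  intro x x'
  rw [claim x x', claim x' x]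
  congr 1
  exact key (Φ x) (Φ x') (hΦ_meas x) (hΦ_meas x')
end

section
/- For every measurable h : X → ℝ with ∫_X h(x)² f_X(x) μ_x(dx) < ∞ and ∫_X h(x) f_X(x) μ_x(dx) = 0, one has ∫_X ∫_X h(x) h(x') p_R(x|x') f_X(x') μ_x(dx') μ_x(dx) = ∫_Y ∫_Y h*(y) h*(y') R(y,dy') f_Y(y) μ_y(dy), where h*(y) = ∫_X h(x) f_{X|Y}(x|y) μ_x(dx). -/
open MeasureTheory ProbabilityTheory ENNReal Function

/-- Cauchy–Schwarz for lintegrals with a weight. -/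
lemma lintegral_cs {α : Type*} [MeasurableSpace α] (μ : Measure α) {g w : α → ℝ≥0∞}
    (hg : Measurable g) (hw : Measurable w) :
    (∫⁻ a, g a * w a ∂μ) ^ 2 ≤ (∫⁻ a, g a ^ 2 * w a ∂μ) * ∫⁻ a, w a ∂μ := by
  have h2 : (2:ℝ).HolderConjugate 2 := Real.HolderConjugate.two_two
  have key := ENNReal.lintegral_mul_le_Lp_mul_Lq μ h2
    (f := fun a => g a * w a ^ (1/2:ℝ)) (g := fun a => w a ^ (1/2:ℝ))
    (hg.mul (hw.pow_const _)).aemeasurable (hw.pow_const _).aemeasurable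
  have hww : ∀ a : ℝ≥0∞, a ^ (1/2:ℝ) * a ^ (1/2:ℝ) = a := by
    intro a
    rw [← ENNReal.rpow_add_of_nonneg _ _ (by norm_num) (by norm_num)]
    norm_num
  have e1 : ∀ a, (fun a => g a * w a ^ (1/2:ℝ)) a * (fun a => w a ^ (1/2:ℝ)) a = g a * w a := by
    intro a; simp only [mul_assoc, hww]
  have e2 : ∀ a, (g a * w a ^ (1/2:ℝ)) ^ (2:ℝ) = g a ^ 2 * w a := by
    intro a
    rw [ENNReal.mul_rpow_of_nonneg _ _ (by norm_num), ← ENNReal.rpow_mul]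
    norm_num
  have e3 : ∀ a, (w a ^ (1/2:ℝ)) ^ (2:ℝ) = w a := by
    intro a
    rw [← ENNReal.rpow_mul]; norm_num
  simp only [Pi.mul_apply] at key
  simp only [e1, e2, e3] at key
  calc (∫⁻ a, g a * w a ∂μ) ^ 2
      ≤ ((∫⁻ a, g a ^ 2 * w a ∂μ) ^ (1/(2:ℝ)) * (∫⁻ a, w a ∂μ) ^ (1/(2:ℝ))) ^ 2 := by
        exact pow_le_pow_left' key 2
    _ = (∫⁻ a, g a ^ 2 * w a ∂μ) * ∫⁻ a, w a ∂μ := by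
        rw [mul_pow, ← ENNReal.rpow_natCast (_ ^ (1/(2:ℝ))) 2, ← ENNReal.rpow_natCast (_ ^ (1/(2:ℝ))) 2,
          ← ENNReal.rpow_mul, ← ENNReal.rpow_mul]
        norm_num

/-- `ofReal` of a Bochner integral of a nonnegative function is at most the lintegral. -/
lemma ofReal_integral_le {α : Type*} [MeasurableSpace α] (μ : Measure α) (g : α → ℝ)
    (hg : 0 ≤ g) :
    ENNReal.ofReal (∫ a, g a ∂μ) ≤ ∫⁻ a, ENNReal.ofReal (g a) ∂μ := by
  by_cases hi : Integrable g μ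
  · rw [ofReal_integral_eq_lintegral_ofReal hi (ae_of_all _ hg)]
  · rw [integral_undef hi]; simp

lemma ennreal_mul_le_sq_add_sq (x y : ℝ≥0∞) : x * y ≤ x ^ 2 + y ^ 2 := by
  rcases le_total x y with hxy | hxy
  · calc x * y ≤ y * y := mul_le_mul_left hxy y
      _ = y ^ 2 := (sq y).symm
      _ ≤ x ^ 2 + y ^ 2 := le_add_self
  · calc x * y ≤ x * x := mul_le_mul_right hxy x
      _ = x ^ 2 := (sq x).symm
      _ ≤ x ^ 2 + y ^ 2 := le_self_add

/-- For every mean-zero square-integrable `h`,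
`∫∫ h(x) h(x') p_R(x|x') f_X(x') μx(dx') μx(dx)
  = ∫∫ h*(y) h*(y') R(y,dy') f_Y(y) μy(dy)`,
where `h*(y) = ∫ h(x) f_{X|Y}(x|y) μx(dx)`. -/
theorem pR_operator_inner_product
    {X Y : Type*}
    [MetricSpace X] [TopologicalSpace.SeparableSpace X] [LocallyCompactSpace X]
    [MeasurableSpace X] [BorelSpace X]
    [MetricSpace Y] [TopologicalSpace.SeparableSpace Y] [LocallyCompactSpace Y]
    [MeasurableSpace Y] [BorelSpace Y]
    (μx : Measure X) (μy : Measure Y) [SigmaFinite μx] [SigmaFinite μy]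
    (f : X → Y → ℝ)
    (hf_meas : Measurable (Function.uncurry f))
    (hf_nonneg : ∀ x y, 0 ≤ f x y)
    (hf_prob : ∫ q, f q.1 q.2 ∂(μx.prod μy) = 1)
    (fX : X → ℝ) (hfX : ∀ x, fX x = ∫ y, f x y ∂μy)
    (fY : Y → ℝ) (hfY : ∀ y, fY y = ∫ x, f x y ∂μx)
    (hfX_pos : ∀ x, 0 < fX x) (hfY_pos : ∀ y, 0 < fY y)
    (fXY : X → Y → ℝ) (hfXY : ∀ x y, fXY x y = f x y / fY y)
    (fYX : Y → X → ℝ) (hfYX : ∀ y x, fYX y x = f x y / fX x)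
    (R : Kernel Y Y) [IsMarkovKernel R]
    (hR_inv : ∀ A : Set Y, MeasurableSet A →
      ∫ y, ((R y) A).toReal * fY y ∂μy = ∫ y in A, fY y ∂μy)
    (pR : X → X → ℝ)
    (hpR : ∀ x x', pR x x' = ∫ y, (∫ y', fXY x y' ∂(R y)) * fYX y x' ∂μy) :
    ∀ h : X → ℝ, Measurable h →
      Integrable (fun x => h x ^ 2 * fX x) μx →
      (∫ x, h x * fX x ∂μx) = 0 →
      ∫ x, (∫ x', h x * h x' * pR x x' * fX x' ∂μx) ∂μx
        = ∫ y, (∫ x, h x * fXY x y ∂μx) *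
            (∫ y', (∫ x, h x * fXY x y' ∂μx) ∂(R y)) * fY y ∂μy := by
  intro h mh hint2 _hmean
  classical
  -- ============ Part 0 : basic measurability and integrability ============
  have mfY : Measurable fY := by
    have : Measurable fun y => ∫ x, f x y ∂μx :=
      (hf_meas.stronglyMeasurable.integral_prod_left (μ := μx)).measurable
    simpa [← hfY] using this
  have mfX : Measurable fX := by
    have : Measurable fun x => ∫ y, f x y ∂μy :=
      (hf_meas.stronglyMeasurable.integral_prod_right (ν := μy)).measurable
    simpa [← hfX] using this
  have mfXY : Measurable (uncurry fXY) := by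
    have : uncurry fXY = fun q : X × Y => f q.1 q.2 / fY q.2 := by
      ext q; exact hfXY q.1 q.2
    rw [this]; exact hf_meas.div (mfY.comp measurable_snd)
  have intf : Integrable (fun q : X × Y => f q.1 q.2) (μx.prod μy) := by
    by_contra hc
    rw [integral_undef hc] at hf_prob; norm_num at hf_prob
  have intf_y : ∀ y, Integrable (fun x => f x y) μx := by
    intro y; by_contra hc
    have := (hfY_pos y).ne'
    rw [hfY y, integral_undef hc] at this; exact this rfl
  have intf_x : ∀ x, Integrable (fun y => f x y) μy := by
    intro x; by_contra hc
    have := (hfX_pos x).ne'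
    rw [hfX x, integral_undef hc] at this; exact this rfl
  -- ENNReal versions
  set a : X → ℝ≥0∞ := fun x => ENNReal.ofReal |h x| with ha_def
  set fXe : X → ℝ≥0∞ := fun x => ENNReal.ofReal (fX x) with hfXe_def
  set fYe : Y → ℝ≥0∞ := fun y => ENNReal.ofReal (fY y) with hfYe_def
  set w : X → Y → ℝ≥0∞ := fun x y => ENNReal.ofReal (fXY x y) with hw_def
  have ma : Measurable a := mh.abs.ennreal_ofReal
  have mfXe : Measurable fXe := mfX.ennreal_ofReal
  have mfYe : Measurable fYe := mfY.ennreal_ofReal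
  have mw : Measurable (uncurry w) := mfXY.ennreal_ofReal
  have mfe : Measurable fun q : X × Y => ENNReal.ofReal (f q.1 q.2) := by
    exact hf_meas.ennreal_ofReal
  have mfe_x : ∀ x, Measurable fun y => ENNReal.ofReal (f x y) := fun x => by
    exact mfe.comp (measurable_const.prodMk measurable_id)
  have mfe_y : ∀ y, Measurable fun x => ENNReal.ofReal (f x y) := fun y => by
    exact mfe.comp (measurable_id.prodMk measurable_const)
  have mw' : Measurable fun q : X × Y => w q.1 q.2 := by exact mw
  have mw_x : ∀ x, Measurable fun y => w x y := fun x => by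
    exact mw'.comp (measurable_const.prodMk measurable_id)
  have mw_y : ∀ y, Measurable fun x => w x y := fun y => by
    exact mw'.comp (measurable_id.prodMk measurable_const)
  have hfYe_pos : ∀ y, fYe y ≠ 0 := fun y => by
    simpa [hfYe_def] using (hfY_pos y)
  have hfYe_top : ∀ y, fYe y ≠ ∞ := fun y => ENNReal.ofReal_ne_top
  have lF_y : ∀ y, ∫⁻ x, ENNReal.ofReal (f x y) ∂μx = fYe y := by
    intro y
    show _ = ENNReal.ofReal (fY y)
    rw [hfY y,
      ofReal_integral_eq_lintegral_ofReal (intf_y y) (ae_of_all _ fun x => hf_nonneg x y)]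
  have lF_x : ∀ x, ∫⁻ y, ENNReal.ofReal (f x y) ∂μy = fXe x := by
    intro x
    show _ = ENNReal.ofReal (fX x)
    rw [hfX x,
      ofReal_integral_eq_lintegral_ofReal (intf_x x) (ae_of_all _ fun y => hf_nonneg x y)]
  have w_eq : ∀ x y, w x y = ENNReal.ofReal (f x y) * (fYe y)⁻¹ := by
    intro x y
    show ENNReal.ofReal (fXY x y) = _
    rw [hfXY, div_eq_mul_inv, ENNReal.ofReal_mul (hf_nonneg x y),
      ENNReal.ofReal_inv_of_pos (hfY_pos y)]
  have w_mul : ∀ x y, w x y * fYe y = ENNReal.ofReal (f x y) := by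
    intro x y
    rw [w_eq, mul_assoc, ENNReal.inv_mul_cancel (hfYe_pos y) (hfYe_top y), mul_one]
  have lw_y : ∀ y, ∫⁻ x, w x y ∂μx = 1 := by
    intro y
    simp only [w_eq]
    rw [lintegral_mul_const' _ _ (ENNReal.inv_ne_top.mpr (hfYe_pos y)), lF_y,
      ENNReal.mul_inv_cancel (hfYe_pos y) (hfYe_top y)]
  -- se, Ge, P
  set se : Y → ℝ≥0∞ := fun y => ∫⁻ x, a x * w x y ∂μx with hse_def
  set Ge : X → Y → ℝ≥0∞ := fun x y => ∫⁻ y', w x y' ∂(R y) with hGe_def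
  set P : Y → ℝ≥0∞ := fun y => ∫⁻ y', se y' ∂(R y) with hP_def
  have mse : Measurable se := by
    apply Measurable.lintegral_prod_left'
      (f := fun q : X × Y => a q.1 * w q.1 q.2)
    exact (ma.comp measurable_fst).mul mw
  have mse2 : Measurable fun y => se y ^ 2 := mse.pow_const 2
  have mGe : Measurable (fun q : X × Y => Ge q.1 q.2) := by
    have : (fun q : X × Y => Ge q.1 q.2)
        = fun q : X × Y => ∫⁻ y', w q.1 y' ∂((Kernel.comap R Prod.snd (measurable_snd : Measurable fun q : X × Y => q.2)) q) := by
      ext q; rw [Kernel.comap_apply]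
    rw [this]
    exact Measurable.lintegral_kernel_prod_right'
      (f := fun q : (X × Y) × Y => w q.1.1 q.2)
      (mw.comp ((measurable_fst.comp measurable_fst).prodMk measurable_snd))
  have mP : Measurable P := by
    exact Measurable.lintegral_kernel (κ := R) mse
  -- ============ Part A : invariance of fY under R, lintegral version ============
  have lprod : ∫⁻ q, ENNReal.ofReal (f q.1 q.2) ∂(μx.prod μy) = 1 := by
    have := ofReal_integral_eq_lintegral_ofReal intf (ae_of_all _ fun q => hf_nonneg q.1 q.2)
    rw [hf_prob] at this
    simpa using this.symm
  have lfY_tot : ∫⁻ y, fYe y ∂μy = 1 := by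
    rw [← lprod, lintegral_prod_symm (fun q : X × Y => ENNReal.ofReal (f q.1 q.2))
      mfe.aemeasurable]
    exact lintegral_congr fun y => (lF_y y).symm
  have lfX_tot : ∫⁻ x, fXe x ∂μx = 1 := by
    rw [← lprod, lintegral_prod (fun q : X × Y => ENNReal.ofReal (f q.1 q.2))
      mfe.aemeasurable]
    exact lintegral_congr fun x => (lF_x x).symm
  have fY_nonneg : ∀ y, 0 ≤ fY y := fun y => (hfY_pos y).le
  have fX_nonneg : ∀ x, 0 ≤ fX x := fun x => (hfX_pos x).le
  have intfY : Integrable fY μy := by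
    refine ⟨mfY.aestronglyMeasurable, ?_⟩
    rw [hasFiniteIntegral_iff_norm]
    have : ∀ y, ENNReal.ofReal ‖fY y‖ = fYe y := fun y => by
      rw [Real.norm_eq_abs, abs_of_nonneg (fY_nonneg y)]
    simp_rw [this, lfY_tot]
    exact one_lt_top
  have intfX : Integrable fX μx := by
    refine ⟨mfX.aestronglyMeasurable, ?_⟩
    rw [hasFiniteIntegral_iff_norm]
    have : ∀ x, ENNReal.ofReal ‖fX x‖ = fXe x := fun x => by
      rw [Real.norm_eq_abs, abs_of_nonneg (fX_nonneg x)]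
    simp_rw [this, lfX_tot]
    exact one_lt_top
  set ν : Measure Y := μy.withDensity fYe with hν_def
  have hbind : ν.bind (fun y => (R : Y → Measure Y) y) = ν := by
    ext A hA
    have hint : Integrable (fun y => ((R y) A).toReal * fY y) μy := by
      refine Integrable.mono' intfY
        ((Kernel.measurable_coe R hA).ennreal_toReal.mul mfY).aestronglyMeasurable
        (ae_of_all _ fun y => ?_)
      rw [Real.norm_eq_abs, abs_of_nonneg (mul_nonneg ENNReal.toReal_nonneg (fY_nonneg y))]
      calc ((R y) A).toReal * fY y ≤ 1 * fY y :=
            mul_le_mul_of_nonneg_right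
              (by simpa using ENNReal.toReal_mono one_ne_top prob_le_one) (fY_nonneg y)
        _ = fY y := one_mul _
    rw [Measure.bind_apply hA (Kernel.measurable R).aemeasurable]
    calc ∫⁻ y, (R y) A ∂ν
        = ∫⁻ y, fYe y * (fun y => (R y) A) y ∂μy := by
          rw [hν_def]
          exact lintegral_withDensity_eq_lintegral_mul μy mfYe (Kernel.measurable_coe R hA)
      _ = ∫⁻ y, ENNReal.ofReal (((R y) A).toReal * fY y) ∂μy := by
          apply lintegral_congr fun y => ?_
          rw [ENNReal.ofReal_mul ENNReal.toReal_nonneg,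
            ENNReal.ofReal_toReal (measure_ne_top _ _), mul_comm]
      _ = ENNReal.ofReal (∫ y, ((R y) A).toReal * fY y ∂μy) :=
          (ofReal_integral_eq_lintegral_ofReal hint
            (ae_of_all _ fun y => mul_nonneg ENNReal.toReal_nonneg (fY_nonneg y))).symm
      _ = ENNReal.ofReal (∫ y in A, fY y ∂μy) := by rw [hR_inv A hA]
      _ = ∫⁻ y in A, fYe y ∂μy :=
          ofReal_integral_eq_lintegral_ofReal (intfY.restrict (s := A))
            (ae_of_all _ fun y => fY_nonneg y)
      _ = ν A := by rw [hν_def, withDensity_apply _ hA]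
  have hinv : ∀ g : Y → ℝ≥0∞, Measurable g →
      ∫⁻ y, (∫⁻ y', g y' ∂(R y)) * fYe y ∂μy = ∫⁻ y, g y * fYe y ∂μy := by
    intro g hg
    have e1 : ∫⁻ y, (∫⁻ y', g y' ∂(R y)) * fYe y ∂μy
        = ∫⁻ y, (∫⁻ y', g y' ∂(R y)) ∂ν := by
      rw [hν_def, lintegral_withDensity_eq_lintegral_mul μy mfYe
        (Measurable.lintegral_kernel (κ := R) hg)]
      exact lintegral_congr fun y => (mul_comm _ _)
    have e2 : ∫⁻ y, g y * fYe y ∂μy = ∫⁻ y, g y ∂ν := by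
      rw [hν_def, lintegral_withDensity_eq_lintegral_mul μy mfYe hg]
      exact lintegral_congr fun y => (mul_comm _ _)
    rw [e1, e2, ← Measure.lintegral_bind (Kernel.measurable R).aemeasurable hg.aemeasurable, hbind]
  -- ============ Part B : finiteness bounds ============
  have A2 : ∫⁻ x, a x ^ 2 * fXe x ∂μx < ∞ := by
    have e : ∀ x, a x ^ 2 * fXe x = ENNReal.ofReal (h x ^ 2 * fX x) := by
      intro x
      rw [ENNReal.ofReal_mul (sq_nonneg _)]
      congr 1
      rw [← ENNReal.ofReal_pow (abs_nonneg _), sq_abs]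
    simp_rw [e]
    rw [← ofReal_integral_eq_lintegral_ofReal hint2
      (ae_of_all _ fun x => mul_nonneg (sq_nonneg _) (fX_nonneg x))]
    exact ofReal_lt_top
  have intabs : Integrable (fun x => |h x| * fX x) μx := by
    refine Integrable.mono' (hint2.add intfX)
      ((mh.abs.mul mfX).aestronglyMeasurable) (ae_of_all _ fun x => ?_)
    rw [Real.norm_eq_abs, abs_of_nonneg (mul_nonneg (abs_nonneg _) (fX_nonneg x))]
    simp only [Pi.add_apply]
    nlinarith [mul_nonneg (sq_nonneg (|h x| - 1)) (fX_nonneg x), sq_abs (h x),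
      mul_nonneg (abs_nonneg (h x)) (fX_nonneg x)]
  have A1 : ∫⁻ x, a x * fXe x ∂μx < ∞ := by
    have e : ∀ x, a x * fXe x = ENNReal.ofReal (|h x| * fX x) := by
      intro x; rw [ENNReal.ofReal_mul (abs_nonneg _)]
    simp_rw [e]
    rw [← ofReal_integral_eq_lintegral_ofReal intabs
      (ae_of_all _ fun x => mul_nonneg (abs_nonneg _) (fX_nonneg x))]
    exact ofReal_lt_top
  -- Tonelli : ∫⁻ y (∫⁻ x g x * w x y) * fYe y = ∫⁻ x g x * fXe x
  have tonelli : ∀ g : X → ℝ≥0∞, Measurable g →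
      ∫⁻ y, (∫⁻ x, g x * w x y ∂μx) * fYe y ∂μy = ∫⁻ x, g x * fXe x ∂μx := by
    intro g hg
    have e : ∀ y, (∫⁻ x, g x * w x y ∂μx) * fYe y
        = ∫⁻ x, g x * ENNReal.ofReal (f x y) ∂μx := by
      intro y
      rw [← lintegral_mul_const _ (show Measurable fun x => g x * w x y from hg.mul (mw_y y))]
      exact lintegral_congr fun x => by rw [mul_assoc, w_mul]
    simp_rw [e]
    rw [← lintegral_lintegral_swap
      (((hg.comp measurable_fst).mul mfe).aemeasurable)]
    apply lintegral_congr fun x => ?_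
    rw [lintegral_const_mul _ (mfe_x x), lF_x]
  have hse_fin : ∫⁻ y, se y * fYe y ∂μy < ∞ := by
    rw [tonelli a ma]; exact A1
  have hse2_fin : ∫⁻ y, se y ^ 2 * fYe y ∂μy < ∞ := by
    have hpt : ∀ y, se y ^ 2 * fYe y ≤ (∫⁻ x, a x ^ 2 * w x y ∂μx) * fYe y := by
      intro y
      apply mul_le_mul_left
      have := lintegral_cs μx (g := a) (w := fun x => w x y) ma (mw_y y)
      rwa [lw_y y, mul_one] at this
    calc ∫⁻ y, se y ^ 2 * fYe y ∂μy
        ≤ ∫⁻ y, (∫⁻ x, a x ^ 2 * w x y ∂μx) * fYe y ∂μy := lintegral_mono hpt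
      _ = ∫⁻ x, a x ^ 2 * fXe x ∂μx := tonelli _ (ma.pow_const 2)
      _ < ∞ := A2
  have hP_fin : ∫⁻ y, P y * fYe y ∂μy < ∞ := by
    rw [hinv se mse]; exact hse_fin
  have hP2_fin : ∫⁻ y, P y ^ 2 * fYe y ∂μy < ∞ := by
    have hpt : ∀ y, P y ^ 2 * fYe y ≤ (∫⁻ y', se y' ^ 2 ∂(R y)) * fYe y := by
      intro y
      apply mul_le_mul_left
      have := lintegral_cs (R y) (g := se) (w := fun _ => 1) mse measurable_const
      simp only [mul_one, lintegral_one, measure_univ] at this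
      exact this
    calc ∫⁻ y, P y ^ 2 * fYe y ∂μy
        ≤ ∫⁻ y, (∫⁻ y', se y' ^ 2 ∂(R y)) * fYe y ∂μy := lintegral_mono hpt
      _ = ∫⁻ y, se y ^ 2 * fYe y ∂μy := hinv _ mse2
      _ < ∞ := hse2_fin
  have hPG : ∀ y, ∫⁻ x, a x * Ge x y ∂μx = P y := by
    intro y
    have e : ∀ x, a x * Ge x y = ∫⁻ y', a x * w x y' ∂(R y) := by
      intro x
      exact (lintegral_const_mul _ (mw_x x)).symm
    simp_rw [e]
    rw [lintegral_lintegral_swap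
      (((ma.comp measurable_fst).mul mw').aemeasurable)]
  have mGeL : Measurable (fun q : X × Y => Ge q.1 q.2 * (se q.2 * fYe q.2)) :=
    mGe.mul ((mse.mul mfYe).comp measurable_snd)
  have hM : ∫⁻ x, a x * (∫⁻ y, Ge x y * (se y * fYe y) ∂μy) ∂μx < ∞ := by
    have mGeL_x : ∀ x, Measurable fun y => Ge x y * (se y * fYe y) := fun x => by
      exact mGeL.comp (measurable_const.prodMk measurable_id)
    have e1 : ∀ x, a x * (∫⁻ y, Ge x y * (se y * fYe y) ∂μy)
        = ∫⁻ y, a x * (Ge x y * (se y * fYe y)) ∂μy := fun x =>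
      (lintegral_const_mul _ (mGeL_x x)).symm
    calc ∫⁻ x, a x * (∫⁻ y, Ge x y * (se y * fYe y) ∂μy) ∂μx
        = ∫⁻ y, ∫⁻ x, a x * (Ge x y * (se y * fYe y)) ∂μx ∂μy := by
          simp_rw [e1]
          exact lintegral_lintegral_swap
            ((ma.comp measurable_fst).mul mGeL).aemeasurable
      _ = ∫⁻ y, P y * (se y * fYe y) ∂μy := by
          apply lintegral_congr fun y => ?_
          have mGe_y : Measurable fun x => Ge x y := by
            exact mGe.comp (measurable_id.prodMk measurable_const)
          rw [← hPG y, ← lintegral_mul_const _ (show Measurable fun x => a x * Ge x y from ma.mul mGe_y)]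
          exact lintegral_congr fun x => (mul_assoc _ _ _).symm
      _ ≤ ∫⁻ y, P y ^ 2 * fYe y + se y ^ 2 * fYe y ∂μy := by
          apply lintegral_mono fun y => ?_
          calc P y * (se y * fYe y) = (P y * se y) * fYe y := (mul_assoc _ _ _).symm
            _ ≤ (P y ^ 2 + se y ^ 2) * fYe y :=
                mul_le_mul_left (ennreal_mul_le_sq_add_sq _ _) _
            _ = P y ^ 2 * fYe y + se y ^ 2 * fYe y := add_mul _ _ _
      _ < ∞ := by
          rw [lintegral_add_left (show Measurable fun y => P y ^ 2 * fYe y from (mP.pow_const 2).mul mfYe)]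
          exact ENNReal.add_lt_top.mpr ⟨hP2_fin, hse2_fin⟩
  -- ============ Part C : the Bochner chain ============
  set G : X → Y → ℝ := fun x y => ∫ y', fXY x y' ∂(R y) with hG_def
  set Hs : Y → ℝ := fun y => ∫ x, h x * fXY x y ∂μx with hHs_def
  set K : Y → ℝ := fun y => Hs y * fY y with hK_def
  have fXY_nonneg : ∀ x y, 0 ≤ fXY x y := fun x y => by
    rw [hfXY]; exact div_nonneg (hf_nonneg x y) (fY_nonneg y)
  have G_nonneg : ∀ x y, 0 ≤ G x y := fun x y =>
    integral_nonneg fun y' => fXY_nonneg x y'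
  have mG : Measurable fun q : X × Y => G q.1 q.2 := by
    have e : (fun q : X × Y => G q.1 q.2)
        = fun q : X × Y => ∫ y', fXY q.1 y'
            ∂((Kernel.comap R Prod.snd (measurable_snd : Measurable fun q : X × Y => q.2)) q) := by
      ext q; rw [Kernel.comap_apply]
    rw [e]
    exact (StronglyMeasurable.integral_kernel_prod_right'
      (f := fun q : (X × Y) × Y => fXY q.1.1 q.2)
      (mfXY.comp ((measurable_fst.comp measurable_fst).prodMk
        measurable_snd)).stronglyMeasurable).measurable
  have mG_x : ∀ x, Measurable fun y => G x y := fun x => by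
    exact mG.comp (measurable_const.prodMk measurable_id)
  have mHs : Measurable Hs := by
    have hsm : StronglyMeasurable (uncurry fun x y => h x * fXY x y) := by
      apply Measurable.stronglyMeasurable
      exact (mh.comp measurable_fst).mul mfXY
    exact (hsm.integral_prod_left (μ := μx)).measurable
  have mK : Measurable K := mHs.mul mfY
  have hKey : ∀ y, ∫ x, h x * f x y ∂μx = K y := by
    intro y
    have e1 : Hs y = (∫ x, h x * f x y ∂μx) * (fY y)⁻¹ := by
      show (∫ x, h x * fXY x y ∂μx) = _
      rw [← integral_mul_const]
      apply integral_congr_ae (ae_of_all _ fun x => ?_)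
      show h x * fXY x y = h x * f x y * (fY y)⁻¹
      rw [hfXY]; ring
    show _ = Hs y * fY y
    rw [e1, mul_assoc, inv_mul_cancel₀ (hfY_pos y).ne', mul_one]
  have ofReal_G_le : ∀ x y, ENNReal.ofReal (G x y) ≤ Ge x y := fun x y =>
    ofReal_integral_le (R y) _ (fun y' => fXY_nonneg x y')
  have hLe : ∀ y, ∫⁻ x, a x * ENNReal.ofReal (f x y) ∂μx = se y * fYe y := by
    intro y
    show _ = (∫⁻ x, a x * w x y ∂μx) * fYe y
    rw [← lintegral_mul_const _ (show Measurable fun x => a x * w x y from ma.mul (mw_y y))]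
    exact lintegral_congr fun x => by rw [mul_assoc, w_mul]
  have ofReal_Hs_le : ∀ y, ENNReal.ofReal |Hs y| ≤ se y := by
    intro y
    calc ENNReal.ofReal |Hs y| ≤ ENNReal.ofReal (∫ x, |h x * fXY x y| ∂μx) := by
          apply ENNReal.ofReal_le_ofReal
          calc |Hs y| = ‖∫ x, h x * fXY x y ∂μx‖ := (Real.norm_eq_abs _).symm
            _ ≤ ∫ x, ‖h x * fXY x y‖ ∂μx := norm_integral_le_integral_norm _
            _ = ∫ x, |h x * fXY x y| ∂μx := by simp only [Real.norm_eq_abs]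
      _ ≤ ∫⁻ x, ENNReal.ofReal |h x * fXY x y| ∂μx :=
          ofReal_integral_le μx _ (fun x => abs_nonneg _)
      _ = se y := by
          apply lintegral_congr fun x => ?_
          rw [abs_mul, abs_of_nonneg (fXY_nonneg x y), ENNReal.ofReal_mul (abs_nonneg _)]
  have ofReal_K_le : ∀ y, ENNReal.ofReal |K y| ≤ se y * fYe y := by
    intro y
    show ENNReal.ofReal |Hs y * fY y| ≤ _
    rw [abs_mul, abs_of_nonneg (fY_nonneg y), ENNReal.ofReal_mul (abs_nonneg _)]
    exact mul_le_mul_left (ofReal_Hs_le y) _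
  -- step 1 : pointwise rewrite of the inner integral
  have step1 : ∀ x, (∫ x', h x * h x' * pR x x' * fX x' ∂μx)
      = h x * ∫ x', h x' * (∫ y, G x y * f x' y ∂μy) ∂μx := by
    intro x
    have e : ∀ x', h x * h x' * pR x x' * fX x'
        = h x * (h x' * (∫ y, G x y * f x' y ∂μy)) := by
      intro x'
      have e2 : pR x x' * fX x' = ∫ y, G x y * f x' y ∂μy := by
        rw [hpR, ← integral_mul_const]
        apply integral_congr_ae (ae_of_all _ fun y => ?_)
        rw [mul_assoc, hfYX, div_mul_cancel₀ _ (hfX_pos x').ne']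
      calc h x * h x' * pR x x' * fX x' = h x * (h x' * (pR x x' * fX x')) := by ring
        _ = _ := by rw [e2]
    simp_rw [e]
    exact integral_const_mul _ _
  -- step 2 : a.e. x, swap the inner double integral
  have mQ : Measurable fun x => ∫⁻ y, Ge x y * (se y * fYe y) ∂μy := by
    exact Measurable.lintegral_prod_right'
      (f := fun q : X × Y => Ge q.1 q.2 * (se q.2 * fYe q.2)) mGeL
  have hae : ∀ᵐ x ∂μx, a x * (∫⁻ y, Ge x y * (se y * fYe y) ∂μy) < ∞ :=
    ae_lt_top (ma.mul mQ) hM.ne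
  have step2 : ∀ᵐ x ∂μx,
      h x * (∫ x', h x' * (∫ y, G x y * f x' y ∂μy) ∂μx)
        = h x * (∫ y, G x y * K y ∂μy) := by
    filter_upwards [hae] with x hx
    by_cases hhx : h x = 0
    · rw [hhx]; simp
    · have hax : a x ≠ 0 := by
        simp only [ha_def, ne_eq, ENNReal.ofReal_eq_zero, not_le]
        exact abs_pos.mpr hhx
      have hQx : (∫⁻ y, Ge x y * (se y * fYe y) ∂μy) ≠ ∞ := by
        intro hcon
        rw [hcon, ENNReal.mul_top hax] at hx
        exact lt_irrefl _ hx
      congr 1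
      have hintx : Integrable (uncurry fun x' y => h x' * (G x y * f x' y)) (μx.prod μy) := by
        refine ⟨?_, ?_⟩
        · apply Measurable.aestronglyMeasurable
          apply Measurable.mul
          · exact mh.comp measurable_fst
          · exact ((mG_x x).comp measurable_snd).mul hf_meas
        · rw [hasFiniteIntegral_iff_norm]
          have ept : ∀ q : X × Y, ENNReal.ofReal ‖h q.1 * (G x q.2 * f q.1 q.2)‖
              = ENNReal.ofReal (G x q.2) * (a q.1 * ENNReal.ofReal (f q.1 q.2)) := by
            intro q
            rw [Real.norm_eq_abs, abs_mul, abs_mul, abs_of_nonneg (G_nonneg x q.2),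
              abs_of_nonneg (hf_nonneg q.1 q.2), ENNReal.ofReal_mul (abs_nonneg _),
              ENNReal.ofReal_mul (G_nonneg x q.2)]
            ring
          calc ∫⁻ q, ENNReal.ofReal ‖uncurry (fun x' y => h x' * (G x y * f x' y)) q‖
                ∂(μx.prod μy)
              = ∫⁻ q : X × Y, ENNReal.ofReal (G x q.2) * (a q.1 * ENNReal.ofReal (f q.1 q.2))
                ∂(μx.prod μy) := by
                simp only [Function.uncurry_def]
                exact lintegral_congr ept
            _ = ∫⁻ y, ∫⁻ x', ENNReal.ofReal (G x y) * (a x' * ENNReal.ofReal (f x' y)) ∂μx ∂μy :=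
                lintegral_prod_symm' _
                  (((mG_x x).comp measurable_snd).ennreal_ofReal.mul
                    ((ma.comp measurable_fst).mul mfe))
            _ = ∫⁻ y, ENNReal.ofReal (G x y) * (se y * fYe y) ∂μy := by
                apply lintegral_congr fun y => ?_
                rw [lintegral_const_mul _ (show Measurable fun x' => a x' * ENNReal.ofReal (f x' y) from ma.mul (mfe_y y)), hLe y]
            _ ≤ ∫⁻ y, Ge x y * (se y * fYe y) ∂μy :=
                lintegral_mono fun y => mul_le_mul_left (ofReal_G_le x y) _
            _ < ∞ := hQx.lt_top
      calc ∫ x', h x' * (∫ y, G x y * f x' y ∂μy) ∂μx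
          = ∫ x', ∫ y, h x' * (G x y * f x' y) ∂μy ∂μx := by
            apply integral_congr_ae (ae_of_all _ fun x' => ?_)
            exact (integral_const_mul _ _).symm
        _ = ∫ y, ∫ x', h x' * (G x y * f x' y) ∂μx ∂μy := integral_integral_swap hintx
        _ = ∫ y, G x y * K y ∂μy := by
            apply integral_congr_ae (ae_of_all _ fun y => ?_)
            calc ∫ x', h x' * (G x y * f x' y) ∂μx
                = ∫ x', G x y * (h x' * f x' y) ∂μx :=
                  integral_congr_ae (ae_of_all _ fun x' => by ring)
              _ = G x y * ∫ x', h x' * f x' y ∂μx := integral_const_mul _ _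
              _ = G x y * K y := by rw [hKey y]
  -- step 3 : swap the outer double integral
  have hint3 : Integrable (uncurry fun x y => h x * (G x y * K y)) (μx.prod μy) := by
    refine ⟨?_, ?_⟩
    · apply Measurable.aestronglyMeasurable
      exact (mh.comp measurable_fst).mul (mG.mul (mK.comp measurable_snd))
    · rw [hasFiniteIntegral_iff_norm]
      have ept : ∀ q : X × Y, ENNReal.ofReal ‖h q.1 * (G q.1 q.2 * K q.2)‖
          ≤ a q.1 * (Ge q.1 q.2 * (se q.2 * fYe q.2)) := by
        intro q
        rw [Real.norm_eq_abs, abs_mul, abs_mul, abs_of_nonneg (G_nonneg q.1 q.2),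
          ENNReal.ofReal_mul (abs_nonneg _), ENNReal.ofReal_mul (G_nonneg q.1 q.2)]
        exact mul_le_mul_right (mul_le_mul' (ofReal_G_le q.1 q.2) (ofReal_K_le q.2)) _
      calc ∫⁻ q, ENNReal.ofReal ‖uncurry (fun x y => h x * (G x y * K y)) q‖ ∂(μx.prod μy)
          ≤ ∫⁻ q : X × Y, a q.1 * (Ge q.1 q.2 * (se q.2 * fYe q.2)) ∂(μx.prod μy) := by
            simp only [Function.uncurry_def]
            exact lintegral_mono ept
        _ = ∫⁻ x, ∫⁻ y, a x * (Ge x y * (se y * fYe y)) ∂μy ∂μx :=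
            lintegral_prod _ ((ma.comp measurable_fst).mul mGeL).aemeasurable
        _ = ∫⁻ x, a x * (∫⁻ y, Ge x y * (se y * fYe y) ∂μy) ∂μx := by
            apply lintegral_congr fun x => ?_
            exact lintegral_const_mul _ (mGeL.comp (measurable_const.prodMk measurable_id))
        _ < ∞ := hM
  have lhs2 : ∫ x, h x * (∫ y, G x y * K y ∂μy) ∂μx
      = ∫ y, (∫ x, h x * G x y ∂μx) * K y ∂μy := by
    calc ∫ x, h x * (∫ y, G x y * K y ∂μy) ∂μx
        = ∫ x, ∫ y, h x * (G x y * K y) ∂μy ∂μx := by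
          apply integral_congr_ae (ae_of_all _ fun x => ?_)
          exact (integral_const_mul _ _).symm
      _ = ∫ y, ∫ x, h x * (G x y * K y) ∂μx ∂μy := integral_integral_swap hint3
      _ = ∫ y, (∫ x, h x * G x y ∂μx) * K y ∂μy := by
          apply integral_congr_ae (ae_of_all _ fun y => ?_)
          rw [← integral_mul_const]
          exact integral_congr_ae (ae_of_all _ fun x => by ring)
  -- step 4 : a.e. y, identify the inner integral with ∫ Hs dR
  have haeP : ∀ᵐ y ∂μy, P y * fYe y < ∞ := ae_lt_top (mP.mul mfYe) hP_fin.ne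
  have step4 : ∀ᵐ y ∂μy, (∫ x, h x * G x y ∂μx) * K y
      = (∫ y', Hs y' ∂(R y)) * K y := by
    filter_upwards [haeP] with y hy
    have hPy : P y ≠ ∞ := by
      intro hcon
      rw [hcon, ENNReal.top_mul (hfYe_pos y)] at hy
      exact lt_irrefl _ hy
    congr 1
    have hint4 : Integrable (uncurry fun x y' => h x * fXY x y') (μx.prod (R y)) := by
      refine ⟨?_, ?_⟩
      · exact ((mh.comp measurable_fst).mul mfXY).aestronglyMeasurable
      · rw [hasFiniteIntegral_iff_norm]
        have ept : ∀ q : X × Y, ENNReal.ofReal ‖h q.1 * fXY q.1 q.2‖ = a q.1 * w q.1 q.2 := by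
          intro q
          rw [Real.norm_eq_abs, abs_mul, abs_of_nonneg (fXY_nonneg _ _),
            ENNReal.ofReal_mul (abs_nonneg _)]
        calc ∫⁻ q, ENNReal.ofReal ‖uncurry (fun x y' => h x * fXY x y') q‖ ∂(μx.prod (R y))
            = ∫⁻ q : X × Y, a q.1 * w q.1 q.2 ∂(μx.prod (R y)) := by
              simp only [Function.uncurry_def]
              exact lintegral_congr ept
          _ = ∫⁻ y', ∫⁻ x, a x * w x y' ∂μx ∂(R y) :=
              lintegral_prod_symm' _ ((ma.comp measurable_fst).mul mw')
          _ = P y := rfl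
          _ < ∞ := hPy.lt_top
    calc ∫ x, h x * G x y ∂μx
        = ∫ x, ∫ y', h x * fXY x y' ∂(R y) ∂μx := by
          apply integral_congr_ae (ae_of_all _ fun x => ?_)
          exact (integral_const_mul _ _).symm
      _ = ∫ y', ∫ x, h x * fXY x y' ∂μx ∂(R y) := integral_integral_swap hint4
      _ = ∫ y', Hs y' ∂(R y) := rfl
  -- assemble everything
  calc ∫ x, (∫ x', h x * h x' * pR x x' * fX x' ∂μx) ∂μx
      = ∫ x, h x * (∫ x', h x' * (∫ y, G x y * f x' y ∂μy) ∂μx) ∂μx :=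
        integral_congr_ae (ae_of_all _ step1)
    _ = ∫ x, h x * (∫ y, G x y * K y ∂μy) ∂μx := integral_congr_ae step2
    _ = ∫ y, (∫ x, h x * G x y ∂μx) * K y ∂μy := lhs2
    _ = ∫ y, (∫ y', Hs y' ∂(R y)) * K y ∂μy := integral_congr_ae step4
    _ = ∫ y, Hs y * (∫ y', Hs y' ∂(R y)) * fY y ∂μy := by
        apply integral_congr_ae (ae_of_all _ fun y => ?_)
        show _ = Hs y * (∫ y', Hs y' ∂(R y)) * fY y
        rw [show K y = Hs y * fY y from rfl]
        ring
end

section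
/- (Theorem 3, covariance-ordering part.) Suppose R and S are two Markov transition kernels on Y having f_Y as invariant density, and suppose R dominates S in the covariance ordering with respect to f_Y: for every measurable φ : Y → ℝ with ∫_Y φ² f_Y dμ_y < ∞ and ∫_Y φ f_Y dμ_y = 0, ∫_Y ∫_Y φ(y) φ(y') R(y,dy') f_Y(y) μ_y(dy) ≤ ∫_Y ∫_Y φ(y) φ(y') S(y,dy') f_Y(y) μ_y(dy). Then for every measurable h : X → ℝ with ∫_X h² f_X dμ_x < ∞ and ∫_X h f_X dμ_x = 0, ∫_X ∫_X h(x) h(x') p_R(x|x') f_X(x') μ_x(dx') μ_x(dx) ≤ ∫_X ∫_X h(x) h(x') p_S(x|x') f_X(x') μ_x(dx') μ_x(dx). -/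
open MeasureTheory ProbabilityTheory ENNReal

theorem PRaux_intOfPos {α : Type*} [MeasurableSpace α] {μ : Measure α} {f : α → ℝ}
    (h : 0 < ∫ a, f a ∂μ) : Integrable f μ := by
  by_contra hc
  rw [integral_undef hc] at h
  exact lt_irrefl 0 h

theorem PRaux_ofRealIntLe {α : Type*} [MeasurableSpace α] (μ : Measure α) (f : α → ℝ)
    (hf : ∀ a, 0 ≤ f a) :
    ENNReal.ofReal (∫ a, f a ∂μ) ≤ ∫⁻ a, ENNReal.ofReal (f a) ∂μ := by
  by_cases hi : Integrable f μ
  · rw [ofReal_integral_eq_lintegral_ofReal hi (.of_forall hf)]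
  · rw [integral_undef hi]; simp

theorem PRaux_CS {α : Type*} [MeasurableSpace α] (μ : Measure α) {a b : α → ℝ≥0∞}
    (ha : Measurable a) (hb : Measurable b) :
    (∫⁻ x, a x * b x ∂μ) ^ 2 ≤ (∫⁻ x, a x ^ 2 ∂μ) * (∫⁻ x, b x ^ 2 ∂μ) := by
  have hpq : Real.HolderConjugate 2 2 := Real.HolderConjugate.two_two
  have h := ENNReal.lintegral_mul_le_Lp_mul_Lq μ hpq ha.aemeasurable hb.aemeasurable
  have h2 : ∀ c : ℝ≥0∞, c ^ (2 : ℝ) = c ^ 2 := fun c => by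
    rw [← ENNReal.rpow_natCast c 2]; norm_num
  simp only [Pi.mul_apply, h2] at h
  calc (∫⁻ x, a x * b x ∂μ) ^ 2
      ≤ ((∫⁻ x, a x ^ 2 ∂μ) ^ (1/2 : ℝ) * (∫⁻ x, b x ^ 2 ∂μ) ^ (1/2 : ℝ)) ^ 2 := by
        gcongr
    _ = (∫⁻ x, a x ^ 2 ∂μ) * (∫⁻ x, b x ^ 2 ∂μ) := by
        rw [mul_pow, ← ENNReal.rpow_natCast ((∫⁻ x, a x ^ 2 ∂μ) ^ (1/2 : ℝ)) 2,
          ← ENNReal.rpow_natCast ((∫⁻ x, b x ^ 2 ∂μ) ^ (1/2 : ℝ)) 2,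
          ← ENNReal.rpow_mul, ← ENNReal.rpow_mul]
        norm_num

theorem PRaux_CS3 {α : Type*} [MeasurableSpace α] (μ : Measure α) {u v w : α → ℝ≥0∞}
    (hu : Measurable u) (hv : Measurable v) (hw : Measurable w) :
    (∫⁻ x, u x * v x * w x ∂μ) ^ 2
      ≤ (∫⁻ x, u x ^ 2 * w x ∂μ) * (∫⁻ x, v x ^ 2 * w x ∂μ) := by
  set s : α → ℝ≥0∞ := fun x => w x ^ (1/2 : ℝ) with hs
  have hss : ∀ x, s x * s x = w x := by
    intro x
    rw [hs, ← ENNReal.rpow_add_of_nonneg _ _ (by norm_num) (by norm_num)]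
    norm_num
  have hsm : Measurable s := hw.pow_const _
  have h := PRaux_CS μ (a := fun x => u x * s x) (b := fun x => v x * s x)
    (hu.mul hsm) (hv.mul hsm)
  have e1 : ∀ x, (u x * s x) * (v x * s x) = u x * v x * w x := by
    intro x; rw [mul_mul_mul_comm, hss]
  have e2 : ∀ x, (u x * s x) ^ 2 = u x ^ 2 * w x := by
    intro x; rw [mul_pow, sq (s x), hss]
  have e3 : ∀ x, (v x * s x) ^ 2 = v x ^ 2 * w x := by
    intro x; rw [mul_pow, sq (s x), hss]
  simp only [e1, e2, e3] at h
  exact h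

theorem PRaux_invLin {Y : Type*} [MeasurableSpace Y] (μy : Measure Y)
    (fY : Y → ℝ) (mfY : Measurable fY) (hfY_nonneg : ∀ y, 0 ≤ fY y)
    (hfY_int : Integrable fY μy) (K : Kernel Y Y) [IsMarkovKernel K]
    (hK : ∀ A : Set Y, MeasurableSet A →
      ∫ y, ((K y) A).toReal * fY y ∂μy = ∫ y in A, fY y ∂μy) :
    ∀ ψ : Y → ℝ≥0∞, Measurable ψ →
      ∫⁻ y, (∫⁻ y', ψ y' ∂(K y)) * ENNReal.ofReal (fY y) ∂μy
        = ∫⁻ y, ψ y * ENNReal.ofReal (fY y) ∂μy := by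
  -- set version in ℝ≥0∞
  have hset : ∀ A : Set Y, MeasurableSet A →
      ∫⁻ y, (K y) A * ENNReal.ofReal (fY y) ∂μy = ∫⁻ y in A, ENNReal.ofReal (fY y) ∂μy := by
    intro A hA
    have hm : Measurable fun y => ((K y) A).toReal * fY y :=
      ((K.measurable_coe hA).ennreal_toReal).mul mfY
    have hint : Integrable (fun y => ((K y) A).toReal * fY y) μy := by
      refine hfY_int.mono' hm.aestronglyMeasurable (Filter.Eventually.of_forall fun y => ?_)
      rw [Real.norm_eq_abs, abs_of_nonneg (mul_nonneg ENNReal.toReal_nonneg (hfY_nonneg y))]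
      have h1 : ((K y) A).toReal ≤ 1 := by
        have := measure_mono (Set.subset_univ A) (μ := K y)
        rw [measure_univ] at this
        simpa using ENNReal.toReal_mono one_ne_top this
      calc ((K y) A).toReal * fY y ≤ 1 * fY y := by
            exact mul_le_mul_of_nonneg_right h1 (hfY_nonneg y)
        _ = fY y := one_mul _
    have h1 : ENNReal.ofReal (∫ y, ((K y) A).toReal * fY y ∂μy)
        = ∫⁻ y, (K y) A * ENNReal.ofReal (fY y) ∂μy := by
      rw [ofReal_integral_eq_lintegral_ofReal hint (Filter.Eventually.of_forall fun y =>
        mul_nonneg ENNReal.toReal_nonneg (hfY_nonneg y))]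
      congr 1
      ext y
      rw [ENNReal.ofReal_mul ENNReal.toReal_nonneg, ENNReal.ofReal_toReal (measure_ne_top _ _)]
    have h2 : ENNReal.ofReal (∫ y in A, fY y ∂μy) = ∫⁻ y in A, ENNReal.ofReal (fY y) ∂μy :=
      ofReal_integral_eq_lintegral_ofReal (hfY_int.restrict)
        (Filter.Eventually.of_forall fun y => hfY_nonneg y)
    rw [← h1, ← h2, hK A hA]
  refine Measurable.ennreal_induction
    (motive := fun ψ => ∫⁻ y, (∫⁻ y', ψ y' ∂(K y)) * ENNReal.ofReal (fY y) ∂μy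
        = ∫⁻ y, ψ y * ENNReal.ofReal (fY y) ∂μy) ?_ ?_ ?_
  · intro c A hA
    have hl : ∀ y : Y, ∫⁻ y', A.indicator (fun _ => c) y' ∂(K y) = c * (K y) A := fun y =>
      lintegral_indicator_const hA c
    simp only [hl]
    rw [show (fun y => c * (K y) A * ENNReal.ofReal (fY y))
        = fun y => c * ((K y) A * ENNReal.ofReal (fY y)) by funext y; ring]
    rw [lintegral_const_mul c (((K.measurable_coe hA)).fun_mul mfY.ennreal_ofReal), hset A hA]
    have : ∀ y, A.indicator (fun _ => c) y * ENNReal.ofReal (fY y)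
        = A.indicator (fun y => c * ENNReal.ofReal (fY y)) y := by
      intro y
      by_cases hy : y ∈ A <;> simp [hy]
    simp only [this]
    rw [lintegral_indicator hA, lintegral_const_mul c mfY.ennreal_ofReal]
  · intro ψ₁ ψ₂ hdisj hm1 hm2 ih1 ih2
    have hl : ∀ y : Y, (∫⁻ y', ψ₁ y' + ψ₂ y' ∂(K y)) * ENNReal.ofReal (fY y)
        = (∫⁻ y', ψ₁ y' ∂(K y)) * ENNReal.ofReal (fY y)
          + (∫⁻ y', ψ₂ y' ∂(K y)) * ENNReal.ofReal (fY y) := by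
      intro y; rw [lintegral_add_left hm1, add_mul]
    simp only [Pi.add_apply, hl, add_mul]
    have m1 : Measurable fun y => ∫⁻ y', ψ₁ y' ∂(K y) :=
      Measurable.lintegral_kernel_prod_right' (κ := K) (f := fun p : Y × Y => ψ₁ p.2)
        (hm1.comp measurable_snd)
    rw [lintegral_add_left (m1.fun_mul mfY.ennreal_ofReal),
      lintegral_add_left (hm1.fun_mul mfY.ennreal_ofReal), ih1, ih2]
  · intro ψn hmn hmono ihn
    have hl : ∀ y : Y, ∫⁻ y', ⨆ n, ψn n y' ∂(K y) = ⨆ n, ∫⁻ y', ψn n y' ∂(K y) := by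
      intro y
      exact lintegral_iSup hmn hmono
    simp only [hl]
    have hmW : ∀ n, Measurable fun y => (∫⁻ y', ψn n y' ∂(K y)) * ENNReal.ofReal (fY y) :=
      fun n => (Measurable.lintegral_kernel_prod_right' (κ := K)
        (f := fun p : Y × Y => ψn n p.2) ((hmn n).comp measurable_snd)).mul mfY.ennreal_ofReal
    have e1 : ∀ y, (⨆ n, ∫⁻ y', ψn n y' ∂(K y)) * ENNReal.ofReal (fY y)
        = ⨆ n, (∫⁻ y', ψn n y' ∂(K y)) * ENNReal.ofReal (fY y) := by
      intro y; exact iSup_mul _ _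
    have e2 : ∀ y, (⨆ n, ψn n y) * ENNReal.ofReal (fY y)
        = ⨆ n, ψn n y * ENNReal.ofReal (fY y) := by
      intro y; exact iSup_mul _ _
    simp only [e1, e2]
    rw [lintegral_iSup hmW, lintegral_iSup (fun n => (hmn n).fun_mul mfY.ennreal_ofReal)]
    · simp only [ihn]
    · intro i j hij y
      exact mul_le_mul_left (hmono hij y) _
    · intro i j hij y
      exact mul_le_mul_left (lintegral_mono fun y' => hmono hij y') _

theorem PRaux_main {X Y : Type*} [MeasurableSpace X] [MeasurableSpace Y]
    (μx : Measure X) (μy : Measure Y) [SigmaFinite μx] [SigmaFinite μy]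
    (f : X → Y → ℝ) (hf_meas : Measurable (Function.uncurry f)) (hf_nonneg : ∀ x y, 0 ≤ f x y)
    (fX : X → ℝ) (hfX : ∀ x, fX x = ∫ y, f x y ∂μy)
    (fY : Y → ℝ) (hfY : ∀ y, fY y = ∫ x, f x y ∂μx)
    (hfX_pos : ∀ x, 0 < fX x) (hfY_pos : ∀ y, 0 < fY y)
    (fXY : X → Y → ℝ) (hfXY : ∀ x y, fXY x y = f x y / fY y)
    (fYX : Y → X → ℝ) (hfYX : ∀ y x, fYX y x = f x y / fX x)
    (h : X → ℝ) (hm : Measurable h)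
    (habs : Integrable (fun x => |h x| * fX x) μx)
    (hh2 : Integrable (fun x => h x ^ 2 * fX x) μx)
    (K : Kernel Y Y) [IsMarkovKernel K]
    (hKinv : ∀ ψ : Y → ℝ≥0∞, Measurable ψ →
      ∫⁻ y, (∫⁻ y', ψ y' ∂(K y)) * ENNReal.ofReal (fY y) ∂μy
        = ∫⁻ y, ψ y * ENNReal.ofReal (fY y) ∂μy)
    (pK : X → X → ℝ)
    (hpK : ∀ x x', pK x x' = ∫ y, (∫ y', fXY x y' ∂(K y)) * fYX y x' ∂μy)
    (φ : Y → ℝ) (hφ : ∀ y, φ y = ∫ x, h x * fXY x y ∂μx) :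
    Integrable (fun y => φ y ^ 2 * fY y) μy ∧
    (∫ y, φ y * fY y ∂μy) = (∫ x, h x * fX x ∂μx) ∧
    ∫ x, (∫ x', h x * h x' * pK x x' * fX x' ∂μx) ∂μx
      = ∫ y, φ y * (∫ y', φ y' ∂(K y)) * fY y ∂μy := by
  -- basic facts
  have hfY_ne : ∀ y, fY y ≠ 0 := fun y => ne_of_gt (hfY_pos y)
  have hfX_ne : ∀ x, fX x ≠ 0 := fun x => ne_of_gt (hfX_pos x)
  have hfP : Measurable fun p : X × Y => f p.1 p.2 := hf_meas
  have mfY : Measurable fY := by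
    have h1 : Measurable fun y => ∫ x, (fun p : X × Y => f p.1 p.2) (x, y) ∂μx :=
      (hfP.stronglyMeasurable.integral_prod_left').measurable
    simpa only [← hfY] using h1
  have mfX : Measurable fX := by
    have h1 : Measurable fun x => ∫ y, (fun p : X × Y => f p.1 p.2) (x, y) ∂μy :=
      (hfP.stronglyMeasurable.integral_prod_right').measurable
    simpa only [← hfX] using h1
  have mfXY : Measurable fun p : X × Y => fXY p.1 p.2 := by
    have : (fun p : X × Y => fXY p.1 p.2) = fun p : X × Y => f p.1 p.2 / fY p.2 := by
      funext p; rw [hfXY]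
    rw [this]; exact hfP.div (mfY.comp measurable_snd)
  have mfXYy : ∀ y, Measurable fun x => fXY x y := fun y =>
    mfXY.comp (measurable_id.prodMk measurable_const)
  have mf_x : ∀ x, Measurable fun y => f x y := fun x =>
    hfP.comp (measurable_const.prodMk measurable_id)
  have mf_y : ∀ y, Measurable fun x => f x y := fun y =>
    hfP.comp (measurable_id.prodMk measurable_const)
  have fXY_nn : ∀ x y, 0 ≤ fXY x y := fun x y => by
    rw [hfXY]; exact div_nonneg (hf_nonneg x y) (le_of_lt (hfY_pos y))
  have fXY_mul : ∀ x y, fXY x y * fY y = f x y := fun x y => by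
    rw [hfXY]; exact div_mul_cancel₀ _ (hfY_ne y)
  have fYX_mul : ∀ (y : Y) (x' : X), fYX y x' * fX x' = f x' y := fun y x' => by
    rw [hfYX]; exact div_mul_cancel₀ _ (hfX_ne x')
  have int_fy : ∀ y, Integrable (fun x => f x y) μx := fun y =>
    PRaux_intOfPos (by rw [← hfY]; exact hfY_pos y)
  have int_fx : ∀ x, Integrable (fun y => f x y) μy := fun x =>
    PRaux_intOfPos (by rw [← hfX]; exact hfX_pos x)
  -- the ENNReal-valued auxiliary functions
  set g : Y → ℝ≥0∞ := fun y => ∫⁻ x, ENNReal.ofReal |h x| * ENNReal.ofReal (fXY x y) ∂μx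
    with hg_def
  set q : Y → ℝ≥0∞ := fun y => ∫⁻ x, ENNReal.ofReal (h x ^ 2) * ENNReal.ofReal (fXY x y) ∂μx
    with hq_def
  have mgU : Measurable fun p : X × Y =>
      ENNReal.ofReal |h p.1| * ENNReal.ofReal (fXY p.1 p.2) :=
    ((hm.comp measurable_fst).abs.ennreal_ofReal).mul mfXY.ennreal_ofReal
  have mqU : Measurable fun p : X × Y =>
      ENNReal.ofReal (h p.1 ^ 2) * ENNReal.ofReal (fXY p.1 p.2) :=
    (((hm.comp measurable_fst).pow_const 2).ennreal_ofReal).mul mfXY.ennreal_ofReal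
  have mg : Measurable g := Measurable.lintegral_prod_left mgU
  have mq : Measurable q := Measurable.lintegral_prod_left mqU
  have L0 : ∀ y, ∫⁻ x, ENNReal.ofReal (fXY x y) ∂μx = 1 := by
    intro y
    have hint : Integrable (fun x => fXY x y) μx := by
      have : (fun x => fXY x y) = fun x => f x y / fY y := by funext x; rw [hfXY]
      rw [this]; exact (int_fy y).div_const _
    rw [← ofReal_integral_eq_lintegral_ofReal hint (.of_forall fun x => fXY_nn x y)]
    have : ∫ x, fXY x y ∂μx = 1 := by
      have e : (fun x => fXY x y) = fun x => f x y / fY y := by funext x; rw [hfXY]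
      rw [e, integral_div, ← hfY, div_self (hfY_ne y)]
    rw [this, ENNReal.ofReal_one]
  have gsq : ∀ y, g y ^ 2 ≤ q y := by
    intro y
    have hcs := PRaux_CS3 μx (u := fun x => ENNReal.ofReal |h x|) (v := fun _ => 1)
      (w := fun x => ENNReal.ofReal (fXY x y))
      (hm.abs.ennreal_ofReal) measurable_const ((mfXYy y).ennreal_ofReal)
    simp only [mul_one, one_mul, one_pow] at hcs
    rw [L0 y, mul_one] at hcs
    calc g y ^ 2 = (∫⁻ x, ENNReal.ofReal |h x| * ENNReal.ofReal (fXY x y) ∂μx) ^ 2 := by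
          rw [hg_def]
      _ ≤ ∫⁻ x, ENNReal.ofReal |h x| ^ 2 * ENNReal.ofReal (fXY x y) ∂μx := hcs
      _ = q y := by
          rw [hq_def]
          refine lintegral_congr fun x => ?_
          rw [← ENNReal.ofReal_pow (abs_nonneg _), sq_abs]
  -- the kernel-averaged functions
  set W : Y → ℝ≥0∞ := fun y => ∫⁻ y', g y' ∂(K y) with hW_def
  have mW : Measurable W :=
    Measurable.lintegral_kernel_prod_right' (κ := K) (f := fun p : Y × Y => g p.2)
      (mg.comp measurable_snd)
  have E1g : ∀ y, ∫⁻ x, ENNReal.ofReal |h x| * ENNReal.ofReal (f x y) ∂μx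
      = g y * ENNReal.ofReal (fY y) := by
    intro y
    rw [hg_def, ← lintegral_mul_const _ (hm.abs.ennreal_ofReal.fun_mul ((mfXYy y).ennreal_ofReal))]
    refine lintegral_congr fun x => ?_
    rw [mul_assoc, ← ENNReal.ofReal_mul (fXY_nn x y), fXY_mul]
  have E1q : ∀ y, ∫⁻ x, ENNReal.ofReal (h x ^ 2) * ENNReal.ofReal (f x y) ∂μx
      = q y * ENNReal.ofReal (fY y) := by
    intro y
    rw [hq_def, ← lintegral_mul_const _ (((hm.pow_const 2).ennreal_ofReal).fun_mul
      ((mfXYy y).ennreal_ofReal))]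
    refine lintegral_congr fun x => ?_
    rw [mul_assoc, ← ENNReal.ofReal_mul (fXY_nn x y), fXY_mul]
  have inner_f : ∀ x, ∫⁻ y, ENNReal.ofReal (f x y) ∂μy = ENNReal.ofReal (fX x) := by
    intro x
    rw [hfX]
    exact (ofReal_integral_eq_lintegral_ofReal (int_fx x)
      (Filter.Eventually.of_forall fun y => hf_nonneg x y)).symm
  have E2g : ∫⁻ y, g y * ENNReal.ofReal (fY y) ∂μy
      = ENNReal.ofReal (∫ x, |h x| * fX x ∂μx) := by
    simp only [← E1g]
    rw [lintegral_lintegral_swap (f := fun y x => ENNReal.ofReal |h x| * ENNReal.ofReal (f x y))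
      (((hm.comp measurable_snd).abs.ennreal_ofReal).mul
        ((hfP.comp (measurable_snd.prodMk measurable_fst)).ennreal_ofReal)).aemeasurable]
    rw [ofReal_integral_eq_lintegral_ofReal habs
      (Filter.Eventually.of_forall fun x => mul_nonneg (abs_nonneg _) (le_of_lt (hfX_pos x)))]
    refine lintegral_congr fun x => ?_
    rw [lintegral_const_mul _ (mf_x x).ennreal_ofReal, inner_f x,
      ENNReal.ofReal_mul (abs_nonneg _)]
  have E2q : ∫⁻ y, q y * ENNReal.ofReal (fY y) ∂μy
      = ENNReal.ofReal (∫ x, h x ^ 2 * fX x ∂μx) := by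
    simp only [← E1q]
    rw [lintegral_lintegral_swap (f := fun y x => ENNReal.ofReal (h x ^ 2) * ENNReal.ofReal (f x y))
      ((((hm.comp measurable_snd).pow_const 2).ennreal_ofReal).mul
        ((hfP.comp (measurable_snd.prodMk measurable_fst)).ennreal_ofReal)).aemeasurable]
    rw [ofReal_integral_eq_lintegral_ofReal hh2
      (Filter.Eventually.of_forall fun x => mul_nonneg (sq_nonneg _) (le_of_lt (hfX_pos x)))]
    refine lintegral_congr fun x => ?_
    rw [lintegral_const_mul _ (mf_x x).ennreal_ofReal, inner_f x,
      ENNReal.ofReal_mul (sq_nonneg _)]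
  -- finiteness chain
  have hWfin_int : ∫⁻ y, W y * ENNReal.ofReal (fY y) ∂μy
      = ENNReal.ofReal (∫ x, |h x| * fX x ∂μx) := by
    rw [hW_def]
    rw [hKinv g mg, E2g]
  have ae_W : ∀ᵐ y ∂μy, W y < ⊤ := by
    have hae := ae_lt_top (mW.fun_mul mfY.ennreal_ofReal)
      (by rw [hWfin_int]; exact ENNReal.ofReal_ne_top)
    filter_upwards [hae] with y hy
    rw [lt_top_iff_ne_top]
    intro heq
    rw [heq, ENNReal.top_mul (by
      simp only [ne_eq, ENNReal.ofReal_eq_zero, not_le]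
      exact hfY_pos y)] at hy
    exact absurd hy (lt_irrefl ⊤)
  have hg2fY_fin : ∫⁻ y, g y ^ 2 * ENNReal.ofReal (fY y) ∂μy < ⊤ := by
    refine lt_of_le_of_lt (lintegral_mono fun y => mul_le_mul_left (gsq y) _) ?_
    rw [E2q]; exact ENNReal.ofReal_lt_top
  have hKg2 : ∫⁻ y, (∫⁻ y', g y' ^ 2 ∂(K y)) * ENNReal.ofReal (fY y) ∂μy < ⊤ := by
    rw [hKinv _ (mg.pow_const 2)]; exact hg2fY_fin
  have hW2fin : ∫⁻ y, W y ^ 2 * ENNReal.ofReal (fY y) ∂μy < ⊤ := by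
    refine lt_of_le_of_lt (lintegral_mono fun y => mul_le_mul_left ?_ _) hKg2
    have hcs := PRaux_CS3 (K y) (u := g) (v := fun _ => 1) (w := fun _ => 1)
      mg measurable_const measurable_const
    simp only [mul_one, one_mul, one_pow, lintegral_const, measure_univ, mul_one] at hcs
    rw [hW_def]
    exact hcs
  set T : ℝ≥0∞ := ∫⁻ y, W y * g y * ENNReal.ofReal (fY y) ∂μy with hT_def
  have hT : T < ⊤ := by
    have hcs := PRaux_CS3 μy (u := W) (v := g) (w := fun y => ENNReal.ofReal (fY y))
      mW mg mfY.ennreal_ofReal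
    rw [lt_top_iff_ne_top]
    intro heq
    rw [hT_def] at heq
    rw [heq] at hcs
    have htop : (⊤ : ℝ≥0∞) ^ 2 = ⊤ := by
      rw [sq]; exact ENNReal.top_mul_top
    rw [htop, top_le_iff] at hcs
    rcases ENNReal.mul_eq_top.mp hcs with ⟨_, hb⟩ | ⟨ha, _⟩
    · exact absurd hb (ne_of_lt hg2fY_fin)
    · exact absurd ha (ne_of_lt hW2fin)
  -- the kernel-averaged density
  set A : X → Y → ℝ := fun x y => ∫ y', fXY x y' ∂(K y) with hA_def
  set Abar : X → Y → ℝ≥0∞ := fun x y => ∫⁻ y', ENNReal.ofReal (fXY x y') ∂(K y) with hAbar_def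
  have hK2ex : ∃ K2 : Kernel (X × Y) Y, IsMarkovKernel K2 ∧ ∀ p : X × Y, K2 p = K p.2 :=
    ⟨K.comap (Prod.snd : X × Y → Y) measurable_snd, by infer_instance,
      fun p => Kernel.comap_apply K measurable_snd p⟩
  obtain ⟨K2, hK2m, hK2⟩ := hK2ex
  have mA : Measurable fun p : X × Y => A p.1 p.2 := by
    have h1 : StronglyMeasurable fun r : (X × Y) × Y => fXY r.1.1 r.2 :=
      (mfXY.comp ((measurable_fst.comp measurable_fst).prodMk measurable_snd)).stronglyMeasurable
    have h2 := h1.integral_kernel_prod_right' (κ := K2)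
    have h3 : (fun p : X × Y => ∫ y', fXY p.1 y' ∂(K2 p))
        = fun p : X × Y => A p.1 p.2 := by
      funext p; rw [hK2, hA_def]
    rw [← h3]
    exact h2.measurable
  have mAbar : Measurable fun p : X × Y => Abar p.1 p.2 := by
    have h1 : Measurable fun r : (X × Y) × Y => ENNReal.ofReal (fXY r.1.1 r.2) :=
      (mfXY.comp ((measurable_fst.comp measurable_fst).prodMk measurable_snd)).ennreal_ofReal
    have h2 := Measurable.lintegral_kernel_prod_right' (κ := K2) h1
    have h3 : (fun p : X × Y => ∫⁻ y', ENNReal.ofReal (fXY p.1 y')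
          ∂(K2 p))
        = fun p : X × Y => Abar p.1 p.2 := by
      funext p; rw [hK2, hAbar_def]
    rw [← h3]
    exact h2
  have mAx : ∀ x, Measurable fun y => A x y := fun x =>
    mA.comp (measurable_const.prodMk measurable_id)
  have mAbarx : ∀ x, Measurable fun y => Abar x y := fun x =>
    mAbar.comp (measurable_const.prodMk measurable_id)
  have mAbary : ∀ y, Measurable fun x => Abar x y := fun y =>
    mAbar.comp (measurable_id.prodMk measurable_const)
  have mAy : ∀ y, Measurable fun x => A x y := fun y =>
    mA.comp (measurable_id.prodMk measurable_const)
  have A_nn : ∀ x y, 0 ≤ A x y := fun x y =>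
    integral_nonneg fun y' => fXY_nn x y'
  have hAAbar : ∀ x y, ENNReal.ofReal (A x y) ≤ Abar x y := fun x y =>
    PRaux_ofRealIntLe (K y) _ (fun y' => fXY_nn x y')
  have hx_swap : ∀ y, ∫⁻ x, ENNReal.ofReal |h x| * Abar x y ∂μx = W y := by
    intro y
    have e : ∀ x, ENNReal.ofReal |h x| * Abar x y
        = ∫⁻ y', ENNReal.ofReal |h x| * ENNReal.ofReal (fXY x y') ∂(K y) := by
      intro x
      rw [hAbar_def]
      exact (lintegral_const_mul _ ((mfXY.comp (measurable_const.prodMk measurable_id)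
        : Measurable fun y' => fXY x y').ennreal_ofReal)).symm
    simp only [e]
    rw [lintegral_lintegral_swap (f := fun x y' =>
      ENNReal.ofReal |h x| * ENNReal.ofReal (fXY x y')) mgU.aemeasurable]
  -- the domination function D
  set D : X → ℝ≥0∞ := fun x => ∫⁻ y, Abar x y * (g y * ENNReal.ofReal (fY y)) ∂μy with hD_def
  have mD : Measurable D := by
    refine Measurable.lintegral_prod_right ?_
    exact mAbar.mul ((mg.mul mfY.ennreal_ofReal).comp measurable_snd)
  have DxT : ∫⁻ x, ENNReal.ofReal |h x| * D x ∂μx = T := by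
    have e : ∀ x, ENNReal.ofReal |h x| * D x
        = ∫⁻ y, ENNReal.ofReal |h x| * (Abar x y * (g y * ENNReal.ofReal (fY y))) ∂μy := by
      intro x
      rw [hD_def]
      exact (lintegral_const_mul _ ((mAbarx x).mul (mg.mul mfY.ennreal_ofReal))).symm
    simp only [e]
    rw [lintegral_lintegral_swap (f := fun x y =>
      ENNReal.ofReal |h x| * (Abar x y * (g y * ENNReal.ofReal (fY y))))
      (((hm.comp measurable_fst).abs.ennreal_ofReal).mul (mAbar.mul
        ((mg.mul mfY.ennreal_ofReal).comp measurable_snd))).aemeasurable]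
    rw [hT_def]
    refine lintegral_congr fun y => ?_
    have e2 : ∀ x, ENNReal.ofReal |h x| * (Abar x y * (g y * ENNReal.ofReal (fY y)))
        = (ENNReal.ofReal |h x| * Abar x y) * (g y * ENNReal.ofReal (fY y)) := fun x =>
      (mul_assoc _ _ _).symm
    simp only [e2]
    rw [lintegral_mul_const _ ((hm.abs.ennreal_ofReal).fun_mul (mAbary y)), hx_swap y]
    ring
  have aeD : ∀ᵐ x ∂μx, h x = 0 ∨ D x < ⊤ := by
    have hae := ae_lt_top ((hm.abs.ennreal_ofReal).fun_mul mD)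
      (by rw [DxT]; exact ne_of_lt hT)
    filter_upwards [hae] with x hx
    by_cases h0 : h x = 0
    · exact Or.inl h0
    · right
      rw [lt_top_iff_ne_top]
      intro heq
      rw [heq, ENNReal.mul_top (by
        simp only [ne_eq, ENNReal.ofReal_eq_zero, not_le]
        exact abs_pos.mpr h0)] at hx
      exact absurd hx (lt_irrefl ⊤)
  -- φ facts
  have mφ : Measurable φ := by
    have h1 : StronglyMeasurable fun p : X × Y => h p.1 * fXY p.1 p.2 :=
      ((hm.comp measurable_fst).mul mfXY).stronglyMeasurable
    have h2 := (h1.integral_prod_left' (μ := μx)).measurable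
    simpa only [← hφ] using h2
  have hφfY : ∀ y, φ y * fY y = ∫ x, h x * f x y ∂μx := by
    intro y
    rw [hφ, ← integral_mul_const]
    refine integral_congr_ae (Filter.Eventually.of_forall fun x => ?_)
    show h x * fXY x y * fY y = h x * f x y
    rw [mul_assoc, fXY_mul]
  have hφ_le : ∀ y, ENNReal.ofReal |φ y| ≤ g y := by
    intro y
    have h1 : |φ y| ≤ ∫ x, |h x * fXY x y| ∂μx := by
      rw [hφ]
      calc |∫ x, h x * fXY x y ∂μx| = ‖∫ x, h x * fXY x y ∂μx‖ := (Real.norm_eq_abs _).symm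
        _ ≤ ∫ x, ‖h x * fXY x y‖ ∂μx := norm_integral_le_integral_norm _
        _ = ∫ x, |h x * fXY x y| ∂μx := by
            simp only [Real.norm_eq_abs]
    calc ENNReal.ofReal |φ y| ≤ ENNReal.ofReal (∫ x, |h x * fXY x y| ∂μx) :=
          ENNReal.ofReal_le_ofReal h1
      _ ≤ ∫⁻ x, ENNReal.ofReal |h x * fXY x y| ∂μx :=
          PRaux_ofRealIntLe μx _ (fun x => abs_nonneg _)
      _ = g y := by
          rw [hg_def]
          refine lintegral_congr fun x => ?_
          rw [abs_mul, abs_of_nonneg (fXY_nn x y), ENNReal.ofReal_mul (abs_nonneg _)]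
  -- conclusion (1) : Integrability of φ² fY
  have conc1 : Integrable (fun y => φ y ^ 2 * fY y) μy := by
    refine ⟨((mφ.pow_const 2).mul mfY).aestronglyMeasurable, ?_⟩
    rw [hasFiniteIntegral_iff_norm]
    refine lt_of_le_of_lt (lintegral_mono fun y => ?_) hg2fY_fin
    rw [Real.norm_eq_abs, abs_of_nonneg (mul_nonneg (sq_nonneg _) (le_of_lt (hfY_pos y))),
      ENNReal.ofReal_mul (sq_nonneg _)]
    refine mul_le_mul_left ?_ _
    rw [← sq_abs (φ y), ENNReal.ofReal_pow (abs_nonneg _)]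
    exact pow_le_pow_left' (hφ_le y) 2
  -- conclusion (2) : the mean identity
  have hL_int : Integrable (fun p : X × Y => h p.1 * f p.1 p.2) (μx.prod μy) := by
    refine ⟨((hm.comp measurable_fst).mul hfP).aestronglyMeasurable, ?_⟩
    rw [hasFiniteIntegral_iff_norm]
    calc ∫⁻ p, ENNReal.ofReal ‖h p.1 * f p.1 p.2‖ ∂(μx.prod μy)
        = ∫⁻ p : X × Y, ENNReal.ofReal |h p.1| * ENNReal.ofReal (f p.1 p.2) ∂(μx.prod μy) := by
          refine lintegral_congr fun p => ?_
          rw [Real.norm_eq_abs, abs_mul, abs_of_nonneg (hf_nonneg _ _),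
            ENNReal.ofReal_mul (abs_nonneg _)]
      _ = ∫⁻ x, ∫⁻ y, ENNReal.ofReal |h x| * ENNReal.ofReal (f x y) ∂μy ∂μx :=
          lintegral_prod _ (((hm.comp measurable_fst).abs.ennreal_ofReal).mul
            hfP.ennreal_ofReal).aemeasurable
      _ = ∫⁻ x, ENNReal.ofReal |h x| * ENNReal.ofReal (fX x) ∂μx := by
          refine lintegral_congr fun x => ?_
          rw [lintegral_const_mul _ (mf_x x).ennreal_ofReal, inner_f x]
      _ = ∫⁻ x, ENNReal.ofReal (|h x| * fX x) ∂μx :=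
          lintegral_congr fun x => (ENNReal.ofReal_mul (abs_nonneg _)).symm
      _ = ENNReal.ofReal (∫ x, |h x| * fX x ∂μx) :=
          (ofReal_integral_eq_lintegral_ofReal habs (Filter.Eventually.of_forall fun x =>
            mul_nonneg (abs_nonneg _) (le_of_lt (hfX_pos x)))).symm
      _ < ⊤ := ENNReal.ofReal_lt_top
  have conc2 : (∫ y, φ y * fY y ∂μy) = ∫ x, h x * fX x ∂μx := by
    calc ∫ y, φ y * fY y ∂μy = ∫ y, ∫ x, h x * f x y ∂μx ∂μy :=
          integral_congr_ae (Filter.Eventually.of_forall hφfY)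
      _ = ∫ x, ∫ y, h x * f x y ∂μy ∂μx :=
          (integral_integral_swap (f := fun x y => h x * f x y) hL_int).symm
      _ = ∫ x, h x * fX x ∂μx := by
          refine integral_congr_ae (Filter.Eventually.of_forall fun x => ?_)
          show (∫ y, h x * f x y ∂μy) = h x * fX x
          rw [integral_const_mul, ← hfX]
  -- auxiliary: lintegral of |h x'| against f(x', y) in x'
  have E1f : ∀ y, ∫⁻ x', ENNReal.ofReal |h x'| * ENNReal.ofReal (f x' y) ∂μx
      = g y * ENNReal.ofReal (fY y) := E1g
  -- step 1 : the inner integral identity, a.e. x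
  have step1 : ∀ᵐ x ∂μx, (∫ x', h x * h x' * pK x x' * fX x' ∂μx)
      = h x * ∫ y, A x y * (φ y * fY y) ∂μy := by
    filter_upwards [aeD] with x hx
    rcases hx with h0 | hD
    · simp [h0]
    · have eq0 : ∀ x', h x * h x' * pK x x' * fX x'
          = h x * ∫ y, h x' * (A x y * f x' y) ∂μy := by
        intro x'
        have e1 : pK x x' * fX x' = ∫ y, A x y * f x' y ∂μy := by
          rw [hpK, ← integral_mul_const]
          refine integral_congr_ae (Filter.Eventually.of_forall fun y => ?_)
          show (∫ y', fXY x y' ∂(K y)) * fYX y x' * fX x' = A x y * f x' y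
          rw [mul_assoc, fYX_mul, hA_def]
        calc h x * h x' * pK x x' * fX x' = h x * (h x' * (pK x x' * fX x')) := by ring
          _ = h x * (h x' * ∫ y, A x y * f x' y ∂μy) := by rw [e1]
          _ = h x * ∫ y, h x' * (A x y * f x' y) ∂μy := by rw [integral_const_mul]
      simp only [eq0]
      rw [integral_const_mul]
      congr 1
      have hint : Integrable (fun p : X × Y => h p.1 * (A x p.2 * f p.1 p.2))
          (μx.prod μy) := by
        have hmint : Measurable fun p : X × Y => h p.1 * (A x p.2 * f p.1 p.2) :=
          (hm.comp measurable_fst).mul (((mAx x).comp measurable_snd).mul hfP)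
        refine ⟨hmint.aestronglyMeasurable, ?_⟩
        rw [hasFiniteIntegral_iff_norm]
        calc ∫⁻ p : X × Y, ENNReal.ofReal ‖h p.1 * (A x p.2 * f p.1 p.2)‖ ∂(μx.prod μy)
            = ∫⁻ y, ∫⁻ x', ENNReal.ofReal ‖h x' * (A x y * f x' y)‖ ∂μx ∂μy :=
              lintegral_prod_symm _ (hmint.norm.ennreal_ofReal).aemeasurable
          _ = ∫⁻ y, ENNReal.ofReal (A x y) * (g y * ENNReal.ofReal (fY y)) ∂μy := by
              refine lintegral_congr fun y => ?_
              have e : ∀ x', ENNReal.ofReal ‖h x' * (A x y * f x' y)‖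
                  = ENNReal.ofReal (A x y)
                    * (ENNReal.ofReal |h x'| * ENNReal.ofReal (f x' y)) := by
                intro x'
                rw [Real.norm_eq_abs, abs_mul, abs_of_nonneg (mul_nonneg (A_nn x y)
                  (hf_nonneg x' y)), ENNReal.ofReal_mul (abs_nonneg _),
                  ENNReal.ofReal_mul (A_nn x y)]
                ring
              simp only [e]
              rw [lintegral_const_mul _ ((hm.abs.ennreal_ofReal).fun_mul
                (mf_y y).ennreal_ofReal), E1f y]
          _ ≤ ∫⁻ y, Abar x y * (g y * ENNReal.ofReal (fY y)) ∂μy :=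
              lintegral_mono fun y => mul_le_mul_left (hAAbar x y) _
          _ < ⊤ := hD
      rw [integral_integral_swap (f := fun x' y => h x' * (A x y * f x' y)) hint]
      refine integral_congr_ae (Filter.Eventually.of_forall fun y => ?_)
      show (∫ x', h x' * (A x y * f x' y) ∂μx) = A x y * (φ y * fY y)
      rw [hφfY y, ← integral_const_mul]
      refine integral_congr_ae (Filter.Eventually.of_forall fun x' => ?_)
      ring
  -- integrability of the big product
  have mPhi : Measurable fun p : X × Y => h p.1 * (A p.1 p.2 * (φ p.2 * fY p.2)) :=
    (hm.comp measurable_fst).mul (mA.mul ((mφ.comp measurable_snd).mul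
      (mfY.comp measurable_snd)))
  have mBnd : Measurable fun p : X × Y =>
      ENNReal.ofReal |h p.1| * (Abar p.1 p.2 * (g p.2 * ENNReal.ofReal (fY p.2))) :=
    ((hm.comp measurable_fst).abs.ennreal_ofReal).mul (mAbar.mul
      ((mg.mul mfY.ennreal_ofReal).comp measurable_snd))
  have intPhi : Integrable (fun p : X × Y => h p.1 * (A p.1 p.2 * (φ p.2 * fY p.2)))
      (μx.prod μy) := by
    refine ⟨mPhi.aestronglyMeasurable, ?_⟩
    rw [hasFiniteIntegral_iff_norm]
    calc ∫⁻ p : X × Y, ENNReal.ofReal ‖h p.1 * (A p.1 p.2 * (φ p.2 * fY p.2))‖ ∂(μx.prod μy)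
        ≤ ∫⁻ p : X × Y, ENNReal.ofReal |h p.1|
            * (Abar p.1 p.2 * (g p.2 * ENNReal.ofReal (fY p.2))) ∂(μx.prod μy) := by
          refine lintegral_mono fun p => ?_
          rw [Real.norm_eq_abs, abs_mul, ENNReal.ofReal_mul (abs_nonneg _)]
          refine mul_le_mul_right ?_ _
          have e : |A p.1 p.2 * (φ p.2 * fY p.2)| = A p.1 p.2 * (|φ p.2| * fY p.2) := by
            rw [abs_mul, abs_of_nonneg (A_nn _ _), abs_mul,
              abs_of_nonneg (le_of_lt (hfY_pos _))]
          rw [e, ENNReal.ofReal_mul (A_nn _ _), ENNReal.ofReal_mul (abs_nonneg _)]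
          exact mul_le_mul (hAAbar _ _) (mul_le_mul_left (hφ_le _) _)
            zero_le zero_le
      _ = ∫⁻ x, ENNReal.ofReal |h x| * D x ∂μx := by
          rw [lintegral_prod _ mBnd.aemeasurable]
          refine lintegral_congr fun x => ?_
          show (∫⁻ y, ENNReal.ofReal |h x| * (Abar x y * (g y * ENNReal.ofReal (fY y))) ∂μy)
              = ENNReal.ofReal |h x| * D x
          exact lintegral_const_mul _ ((mAbarx x).mul (mg.mul mfY.ennreal_ofReal))
      _ = T := DxT
      _ < ⊤ := hT
  -- step 3 : a.e. identification of the inner x-integral with the kernel integral of φ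
  have step3 : ∀ᵐ y ∂μy, (∫ x, h x * A x y ∂μx) = ∫ y', φ y' ∂(K y) := by
    filter_upwards [ae_W] with y hy
    have hmint2 : Measurable fun p : X × Y => h p.1 * fXY p.1 p.2 :=
      (hm.comp measurable_fst).mul mfXY
    have hintK : Integrable (fun p : X × Y => h p.1 * fXY p.1 p.2) (μx.prod (K y)) := by
      refine ⟨hmint2.aestronglyMeasurable, ?_⟩
      rw [hasFiniteIntegral_iff_norm]
      calc ∫⁻ p : X × Y, ENNReal.ofReal ‖h p.1 * fXY p.1 p.2‖ ∂(μx.prod (K y))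
          = ∫⁻ y', ∫⁻ x, ENNReal.ofReal |h x| * ENNReal.ofReal (fXY x y') ∂μx ∂(K y) := by
            rw [lintegral_prod_symm _ (hmint2.norm.ennreal_ofReal).aemeasurable]
            refine lintegral_congr fun y' => lintegral_congr fun x => ?_
            rw [Real.norm_eq_abs, abs_mul, abs_of_nonneg (fXY_nn _ _),
              ENNReal.ofReal_mul (abs_nonneg _)]
        _ = W y := rfl
        _ < ⊤ := hy
    have e : ∀ x, h x * A x y = ∫ y', h x * fXY x y' ∂(K y) := fun x =>
      (integral_const_mul _ _).symm
    simp only [e]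
    rw [integral_integral_swap (f := fun x y' => h x * fXY x y') hintK]
    refine integral_congr_ae (Filter.Eventually.of_forall fun y' => ?_)
    show (∫ x, h x * fXY x y' ∂μx) = φ y'
    rw [hφ]
  refine ⟨conc1, conc2, ?_⟩
  calc ∫ x, (∫ x', h x * h x' * pK x x' * fX x' ∂μx) ∂μx
      = ∫ x, h x * ∫ y, A x y * (φ y * fY y) ∂μy ∂μx := integral_congr_ae step1
    _ = ∫ x, ∫ y, h x * (A x y * (φ y * fY y)) ∂μy ∂μx := by
        refine integral_congr_ae (Filter.Eventually.of_forall fun x => ?_)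
        show h x * (∫ y, A x y * (φ y * fY y) ∂μy)
            = ∫ y, h x * (A x y * (φ y * fY y)) ∂μy
        rw [integral_const_mul]
    _ = ∫ y, ∫ x, h x * (A x y * (φ y * fY y)) ∂μx ∂μy :=
        integral_integral_swap (f := fun x y => h x * (A x y * (φ y * fY y))) intPhi
    _ = ∫ y, (∫ x, h x * A x y ∂μx) * (φ y * fY y) ∂μy := by
        refine integral_congr_ae (Filter.Eventually.of_forall fun y => ?_)
        show (∫ x, h x * (A x y * (φ y * fY y)) ∂μx)
            = (∫ x, h x * A x y ∂μx) * (φ y * fY y)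
        rw [← integral_mul_const]
        refine integral_congr_ae (Filter.Eventually.of_forall fun x => ?_)
        show h x * (A x y * (φ y * fY y)) = h x * A x y * (φ y * fY y)
        ring
    _ = ∫ y, φ y * (∫ y', φ y' ∂(K y)) * fY y ∂μy := by
        refine integral_congr_ae ?_
        filter_upwards [step3] with y hy
        rw [hy]; ring

/-- Theorem 3 (covariance-ordering part): if `R ⪰₁ S` on `Y` (with respect to `f_Y`),
then `p_R ⪰₁ p_S` on `X` (with respect to `f_X`). -/
theorem pR_covariance_ordering
    {X Y : Type*}
    [MetricSpace X] [TopologicalSpace.SeparableSpace X] [LocallyCompactSpace X]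
    [MeasurableSpace X] [BorelSpace X]
    [MetricSpace Y] [TopologicalSpace.SeparableSpace Y] [LocallyCompactSpace Y]
    [MeasurableSpace Y] [BorelSpace Y]
    (μx : Measure X) (μy : Measure Y) [SigmaFinite μx] [SigmaFinite μy]
    (f : X → Y → ℝ)
    (hf_meas : Measurable (Function.uncurry f))
    (hf_nonneg : ∀ x y, 0 ≤ f x y)
    (hf_prob : ∫ q, f q.1 q.2 ∂(μx.prod μy) = 1)
    (fX : X → ℝ) (hfX : ∀ x, fX x = ∫ y, f x y ∂μy)
    (fY : Y → ℝ) (hfY : ∀ y, fY y = ∫ x, f x y ∂μx)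
    (hfX_pos : ∀ x, 0 < fX x) (hfY_pos : ∀ y, 0 < fY y)
    (fXY : X → Y → ℝ) (hfXY : ∀ x y, fXY x y = f x y / fY y)
    (fYX : Y → X → ℝ) (hfYX : ∀ y x, fYX y x = f x y / fX x)
    (R S : Kernel Y Y) [IsMarkovKernel R] [IsMarkovKernel S]
    (hR_inv : ∀ A : Set Y, MeasurableSet A →
      ∫ y, ((R y) A).toReal * fY y ∂μy = ∫ y in A, fY y ∂μy)
    (hS_inv : ∀ A : Set Y, MeasurableSet A →
      ∫ y, ((S y) A).toReal * fY y ∂μy = ∫ y in A, fY y ∂μy)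
    (hRS : ∀ φ : Y → ℝ, Measurable φ →
      Integrable (fun y => φ y ^ 2 * fY y) μy →
      (∫ y, φ y * fY y ∂μy) = 0 →
      ∫ y, φ y * (∫ y', φ y' ∂(R y)) * fY y ∂μy
        ≤ ∫ y, φ y * (∫ y', φ y' ∂(S y)) * fY y ∂μy)
    (pR : X → X → ℝ)
    (hpR : ∀ x x', pR x x' = ∫ y, (∫ y', fXY x y' ∂(R y)) * fYX y x' ∂μy)
    (pS : X → X → ℝ)
    (hpS : ∀ x x', pS x x' = ∫ y, (∫ y', fXY x y' ∂(S y)) * fYX y x' ∂μy) :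
    ∀ h : X → ℝ, Measurable h →
      Integrable (fun x => h x ^ 2 * fX x) μx →
      (∫ x, h x * fX x ∂μx) = 0 →
      ∫ x, (∫ x', h x * h x' * pR x x' * fX x' ∂μx) ∂μx
        ≤ ∫ x, (∫ x', h x * h x' * pS x x' * fX x' ∂μx) ∂μx := by
  intro h hm hh2 hmean
  have hfP : Measurable fun p : X × Y => f p.1 p.2 := hf_meas
  have mfY : Measurable fY := by
    have h1 : Measurable fun y => ∫ x, (fun p : X × Y => f p.1 p.2) (x, y) ∂μx :=
      (hfP.stronglyMeasurable.integral_prod_left').measurable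
    simpa only [← hfY] using h1
  have mfX : Measurable fX := by
    have h1 : Measurable fun x => ∫ y, (fun p : X × Y => f p.1 p.2) (x, y) ∂μy :=
      (hfP.stronglyMeasurable.integral_prod_right').measurable
    simpa only [← hfX] using h1
  have mfXY : Measurable fun p : X × Y => fXY p.1 p.2 := by
    have e : (fun p : X × Y => fXY p.1 p.2) = fun p : X × Y => f p.1 p.2 / fY p.2 := by
      funext p; rw [hfXY]
    rw [e]; exact hfP.div (mfY.comp measurable_snd)
  have hfint : Integrable (fun q : X × Y => f q.1 q.2) (μx.prod μy) :=
    PRaux_intOfPos (by rw [hf_prob]; exact one_pos)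
  have hfX_int : Integrable fX μx :=
    hfint.integral_prod_left.congr (Filter.Eventually.of_forall fun x => (hfX x).symm)
  have hfY_int : Integrable fY μy :=
    hfint.integral_prod_right.congr (Filter.Eventually.of_forall fun y => (hfY y).symm)
  have habs : Integrable (fun x => |h x| * fX x) μx := by
    refine Integrable.mono' ((hfX_int.add hh2).div_const 2)
      ((hm.abs.mul mfX).aestronglyMeasurable)
      (Filter.Eventually.of_forall fun x => ?_)
    rw [Real.norm_eq_abs, abs_of_nonneg (mul_nonneg (abs_nonneg _) (le_of_lt (hfX_pos x)))]
    have h1 : 0 ≤ fX x := le_of_lt (hfX_pos x)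
    simp only [Pi.add_apply]
    nlinarith [mul_nonneg h1 (sq_nonneg (|h x| - 1)), sq_abs (h x), abs_nonneg (h x)]
  set φ : Y → ℝ := fun y => ∫ x, h x * fXY x y ∂μx with hφ_def
  have mφ : Measurable φ := by
    have h1 : StronglyMeasurable fun p : X × Y => h p.1 * fXY p.1 p.2 :=
      ((hm.comp measurable_fst).mul mfXY).stronglyMeasurable
    exact (h1.integral_prod_left' (μ := μx)).measurable
  have hfY_nonneg : ∀ y, 0 ≤ fY y := fun y => le_of_lt (hfY_pos y)
  obtain ⟨int2, mean_eq, idR⟩ := PRaux_main μx μy f hf_meas hf_nonneg fX hfX fY hfY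
    hfX_pos hfY_pos fXY hfXY fYX hfYX h hm habs hh2 R
    (PRaux_invLin μy fY mfY hfY_nonneg hfY_int R hR_inv) pR hpR φ (fun y => rfl)
  obtain ⟨-, -, idS⟩ := PRaux_main μx μy f hf_meas hf_nonneg fX hfX fY hfY
    hfX_pos hfY_pos fXY hfXY fYX hfYX h hm habs hh2 S
    (PRaux_invLin μy fY mfY hfY_nonneg hfY_int S hS_inv) pS hpS φ (fun y => rfl)
  rw [idR, idS]
  exact hRS φ mφ int2 (mean_eq.trans hmean)
end

section
/- (Theorem 3, operator-norm part, via inequality (7).) Suppose q₁ and q₂ are Markov transition densities on X that are DA algorithms with respect to joint probability densities f* and f̃ on X × Y respectively, where both f* and f̃ have x-marginal f_X, and suppose that for every measurable h : X → ℝ with ∫_X h² f_X dμ_x < ∞ and ∫_X h f_X dμ_x = 0 one has ∫∫ h(x) h(x') q₁(x|x') f_X(x') μ_x(dx') μ_x(dx) ≤ ∫∫ h(x) h(x') q₂(x|x') f_X(x') μ_x(dx') μ_x(dx). Then for every such h, ∫_Y (∫_X h(x) f*(x,y)/f*_Y(y) μ_x(dx))² f*_Y(y) μ_y(dy) ≤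 ∫_Y (∫_X h(x) f̃(x,y)/f̃_Y(y) μ_x(dx))² f̃_Y(y) μ_y(dy), where f*_Y(y) = ∫_X f*(x,y) μ_x(dx) and f̃_Y(y) = ∫_X f̃(x,y) μ_x(dx); i.e. Var[E(h(X*)|Y*)] ≤ Var[E(h(X̃)|Ỹ)] for (X*,Y*) ~ f* and (X̃,Ỹ) ~ f̃. Consequently, the suprema of these quantities over all h with ∫_X h² f_X dμ_x = 1 and ∫_X h f_X dμ_x = 0 satisfy the same inequality. -/
open MeasureTheory

private lemma integrable_of_pos_integral {α : Type*} [MeasurableSpace α] {μ : Measure α}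
    {f : α → ℝ} (h : 0 < ∫ x, f x ∂μ) : Integrable f μ := by
  by_contra hn
  rw [integral_undef hn] at h
  exact lt_irrefl 0 h

private lemma da_key {X Y : Type*} [MeasurableSpace X] [MeasurableSpace Y]
    (μx : Measure X) (μy : Measure Y) [SigmaFinite μx] [SigmaFinite μy]
    (fX : X → ℝ) (hfX_pos : ∀ x, 0 < fX x)
    (f : X → Y → ℝ) (hf_meas : Measurable (Function.uncurry f))
    (hf_nonneg : ∀ x y, 0 ≤ f x y)
    (hf_prob : ∫ q, f q.1 q.2 ∂(μx.prod μy) = 1)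
    (hf_marg : ∀ x, ∫ y, f x y ∂μy = fX x)
    (fY : Y → ℝ) (hfY : ∀ y, fY y = ∫ x, f x y ∂μx) (hfY_pos : ∀ y, 0 < fY y)
    (q : X → X → ℝ)
    (hq : ∀ x x', q x x' = ∫ y, (f x y / fY y) * (f x' y / fX x') ∂μy)
    (h : X → ℝ) (hh : Measurable h)
    (hh2 : Integrable (fun x => h x ^ 2 * fX x) μx) :
    (∫ x, (∫ x', h x * h x' * q x x' * fX x' ∂μx) ∂μx
      = ∫ y, (∫ x, h x * (f x y / fY y) ∂μx) ^ 2 * fY y ∂μy) ∧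
    (∫ y, (∫ x, h x * (f x y / fY y) ∂μx) ^ 2 * fY y ∂μy ≤ ∫ x, h x ^ 2 * fX x ∂μx) := by
  have hf_meas' : Measurable fun p : X × Y => f p.1 p.2 := hf_meas
  -- basic slice integrability
  have hfmx : ∀ y, Integrable (fun x => f x y) μx := fun y =>
    integrable_of_pos_integral (by rw [← hfY y]; exact hfY_pos y)
  have hfmy : ∀ x, Integrable (fun y => f x y) μy := fun x =>
    integrable_of_pos_integral (by rw [hf_marg x]; exact hfX_pos x)
  have hfprod : Integrable (fun p : X × Y => f p.1 p.2) (μx.prod μy) :=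
    integrable_of_pos_integral (by rw [hf_prob]; norm_num)
  -- measurability
  have mψ1 : Measurable (fun p : X × Y => h p.1 * f p.1 p.2) :=
    (hh.comp measurable_fst).mul hf_meas'
  have mψ2 : Measurable (fun p : X × Y => h p.1 ^ 2 * f p.1 p.2) :=
    ((hh.comp measurable_fst).pow_const 2).mul hf_meas'
  have mψa : Measurable (fun p : X × Y => |h p.1| * f p.1 p.2) :=
    ((hh.comp measurable_fst).abs).mul hf_meas'
  have mfY : Measurable fY := by
    have h1 : StronglyMeasurable (fun y => ∫ x, f x y ∂μx) :=
      StronglyMeasurable.integral_prod_left hf_meas.stronglyMeasurable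
    have e : fY = fun y => ∫ x, f x y ∂μx := funext hfY
    rw [e]; exact h1.measurable
  -- product integrability of h² f
  have hψ2 : Integrable (fun p : X × Y => h p.1 ^ 2 * f p.1 p.2) (μx.prod μy) := by
    refine (integrable_prod_iff mψ2.aestronglyMeasurable).2 ⟨?_, ?_⟩
    · exact Filter.Eventually.of_forall fun x => (hfmy x).const_mul (h x ^ 2)
    · have e : (fun x => ∫ y, ‖h x ^ 2 * f x y‖ ∂μy) = fun x => h x ^ 2 * fX x := by
        funext x
        show (∫ y, ‖h x ^ 2 * f x y‖ ∂μy) = h x ^ 2 * fX x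
        rw [← hf_marg x, ← integral_const_mul]
        refine integral_congr_ae (Filter.Eventually.of_forall fun y => ?_)
        show ‖h x ^ 2 * f x y‖ = h x ^ 2 * f x y
        rw [Real.norm_eq_abs, abs_of_nonneg (mul_nonneg (sq_nonneg _) (hf_nonneg x y))]
      show Integrable (fun x => ∫ y, ‖h x ^ 2 * f x y‖ ∂μy) μx
      rw [e]; exact hh2
  -- product integrability of h f
  have habs : ∀ t : ℝ, |t| ≤ (t ^ 2 + 1) / 2 := fun t => by
    nlinarith [sq_nonneg (|t| - 1), sq_abs t, abs_nonneg t]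
  have hψ1 : Integrable (fun p : X × Y => h p.1 * f p.1 p.2) (μx.prod μy) := by
    refine Integrable.mono' ((hψ2.add hfprod).div_const 2) mψ1.aestronglyMeasurable
      (Filter.Eventually.of_forall fun p => ?_)
    show ‖h p.1 * f p.1 p.2‖ ≤ (h p.1 ^ 2 * f p.1 p.2 + f p.1 p.2) / 2
    rw [Real.norm_eq_abs, abs_mul, abs_of_nonneg (hf_nonneg p.1 p.2)]
    have h1 := habs (h p.1)
    have h2 := hf_nonneg p.1 p.2
    calc |h p.1| * f p.1 p.2 ≤ ((h p.1 ^ 2 + 1) / 2) * f p.1 p.2 :=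
          mul_le_mul_of_nonneg_right h1 h2
      _ = (h p.1 ^ 2 * f p.1 p.2 + f p.1 p.2) / 2 := by ring
  have hψa : Integrable (fun p : X × Y => |h p.1| * f p.1 p.2) (μx.prod μy) :=
    hψ1.norm.congr (Filter.Eventually.of_forall fun p => by
      show ‖h p.1 * f p.1 p.2‖ = |h p.1| * f p.1 p.2
      rw [Real.norm_eq_abs, abs_mul, abs_of_nonneg (hf_nonneg p.1 p.2)])
  -- a.e. slices in x
  have haeψ1 : ∀ᵐ y ∂μy, Integrable (fun x => h x * f x y) μx :=
    ((integrable_prod_iff' mψ1.aestronglyMeasurable).1 hψ1).1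
  have haeψ2 : ∀ᵐ y ∂μy, Integrable (fun x => h x ^ 2 * f x y) μx :=
    ((integrable_prod_iff' mψ2.aestronglyMeasurable).1 hψ2).1
  have haeψa : ∀ᵐ y ∂μy, Integrable (fun x => |h x| * f x y) μx :=
    ((integrable_prod_iff' mψa.aestronglyMeasurable).1 hψa).1
  -- integrability of the marginal integrals
  have hG_int : Integrable (fun y => ∫ x, h x * f x y ∂μx) μy := hψ1.integral_prod_right
  have hS_int : Integrable (fun y => ∫ x, h x ^ 2 * f x y ∂μx) μy := hψ2.integral_prod_right
  have hT_int : Integrable (fun y => ∫ x, |h x| * f x y ∂μx) μy := hψa.integral_prod_right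
  have hfY_int : Integrable fY μy :=
    hfprod.integral_prod_right.congr (Filter.Eventually.of_forall fun y => (hfY y).symm)
  have mG : Measurable (fun y => ∫ x, h x * f x y ∂μx) :=
    (StronglyMeasurable.integral_prod_left (f := fun x y => h x * f x y)
      mψ1.stronglyMeasurable).measurable
  have mT : Measurable (fun y => ∫ x, |h x| * f x y ∂μx) :=
    (StronglyMeasurable.integral_prod_left (f := fun x y => |h x| * f x y)
      mψa.stronglyMeasurable).measurable
  have hS_eq : ∫ y, (∫ x, h x ^ 2 * f x y ∂μx) ∂μy = ∫ x, h x ^ 2 * fX x ∂μx := by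
    rw [← integral_integral_swap (f := fun x y => h x ^ 2 * f x y) hψ2]
    refine integral_congr_ae (Filter.Eventually.of_forall fun x => ?_)
    show (∫ y, h x ^ 2 * f x y ∂μy) = h x ^ 2 * fX x
    rw [integral_const_mul, hf_marg x]
  -- Cauchy–Schwarz a.e. in y (for h and for |h|), via the discriminant
  have hCS : ∀ᵐ y ∂μy,
      (∫ x, h x * f x y ∂μx) ^ 2 ≤ (∫ x, h x ^ 2 * f x y ∂μx) * fY y ∧
      (∫ x, |h x| * f x y ∂μx) ^ 2 ≤ (∫ x, h x ^ 2 * f x y ∂μx) * fY y := by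
    filter_upwards [haeψ1, haeψ2, haeψa] with y h1 h2 h3
    have quad : ∀ g : X → ℝ, Integrable (fun x => g x * f x y) μx →
        (∀ x, g x ^ 2 = h x ^ 2) →
        (∫ x, g x * f x y ∂μx) ^ 2 ≤ (∫ x, h x ^ 2 * f x y ∂μx) * fY y := by
      intro g hgy hg2
      have expand : ∀ t : ℝ, 0 ≤ (∫ x, h x ^ 2 * f x y ∂μx) * (t * t)
          + (2 * ∫ x, g x * f x y ∂μx) * t + fY y := by
        intro t
        have e : ∫ x, (t * g x + 1) ^ 2 * f x y ∂μx
            = (∫ x, h x ^ 2 * f x y ∂μx) * (t * t)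
              + (2 * ∫ x, g x * f x y ∂μx) * t + fY y := by
          have e0 : (fun x => (t * g x + 1) ^ 2 * f x y)
              = fun x => ((t * t) * (h x ^ 2 * f x y) + (2 * t) * (g x * f x y)) + f x y := by
            funext x
            show (t * g x + 1) ^ 2 * f x y
              = ((t * t) * (h x ^ 2 * f x y) + (2 * t) * (g x * f x y)) + f x y
            rw [← hg2 x]; ring
          have i1 : Integrable (fun x => (t * t) * (h x ^ 2 * f x y)) μx :=
            h2.const_mul (t * t)
          have i2 : Integrable (fun x => (2 * t) * (g x * f x y)) μx :=
            hgy.const_mul (2 * t)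
          have i12 : Integrable
              (fun x => (t * t) * (h x ^ 2 * f x y) + (2 * t) * (g x * f x y)) μx :=
            i1.add i2
          rw [e0, integral_add i12 (hfmx y), integral_add i1 i2,
            integral_const_mul, integral_const_mul, ← hfY y]
          ring
        have hnn : 0 ≤ ∫ x, (t * g x + 1) ^ 2 * f x y ∂μx :=
          integral_nonneg fun x => mul_nonneg (sq_nonneg _) (hf_nonneg x y)
        rw [e] at hnn; exact hnn
      have hd := discrim_le_zero expand
      rw [discrim] at hd
      nlinarith [hd]
    exact ⟨quad h h1 (fun x => rfl), quad (fun x => |h x|) h3 (fun x => sq_abs _)⟩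
  have hGT : ∀ y, |∫ x, h x * f x y ∂μx| ≤ ∫ x, |h x| * f x y ∂μx := by
    intro y
    have e : ∫ x, ‖h x * f x y‖ ∂μx = ∫ x, |h x| * f x y ∂μx :=
      integral_congr_ae (Filter.Eventually.of_forall fun x => by
        show ‖h x * f x y‖ = |h x| * f x y
        rw [Real.norm_eq_abs, abs_mul, abs_of_nonneg (hf_nonneg x y)])
    calc |∫ x, h x * f x y ∂μx| = ‖∫ x, h x * f x y ∂μx‖ := (Real.norm_eq_abs _).symm
      _ ≤ ∫ x, ‖h x * f x y‖ ∂μx := norm_integral_le_integral_norm _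
      _ = ∫ x, |h x| * f x y ∂μx := e
  -- integrability of Ψ(x,y) = (h x f x y) * (G y / fY y) on the product
  have mΨ : AEStronglyMeasurable
      (fun p : X × Y => (h p.1 * f p.1 p.2) * ((∫ x, h x * f x p.2 ∂μx) / fY p.2))
      (μx.prod μy) := by
    refine mψ1.aestronglyMeasurable.mul ?_
    have hg : AEStronglyMeasurable (fun y => (∫ x, h x * f x y ∂μx) / fY y) μy :=
      (mG.div mfY).aestronglyMeasurable
    exact hg.comp_quasiMeasurePreserving Measure.quasiMeasurePreserving_snd
  have hΨ : Integrable
      (fun p : X × Y => (h p.1 * f p.1 p.2) * ((∫ x, h x * f x p.2 ∂μx) / fY p.2))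
      (μx.prod μy) := by
    refine (integrable_prod_iff' mΨ).2 ⟨?_, ?_⟩
    · filter_upwards [haeψ1] with y h1
      exact h1.mul_const _
    · have e : ∀ y, (∫ x, ‖(h x * f x y) * ((∫ x, h x * f x y ∂μx) / fY y)‖ ∂μx)
          = (∫ x, |h x| * f x y ∂μx) * |(∫ x, h x * f x y ∂μx) / fY y| := by
        intro y
        rw [← integral_mul_const]
        refine integral_congr_ae (Filter.Eventually.of_forall fun x => ?_)
        show ‖(h x * f x y) * ((∫ x, h x * f x y ∂μx) / fY y)‖
            = |h x| * f x y * |(∫ x, h x * f x y ∂μx) / fY y|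
        rw [Real.norm_eq_abs, abs_mul, abs_mul, abs_of_nonneg (hf_nonneg x y)]
      refine Integrable.mono' hS_int ?_ ?_
      · refine AEStronglyMeasurable.congr
          (f := fun y => (∫ x, |h x| * f x y ∂μx) * |(∫ x, h x * f x y ∂μx) / fY y|) ?_ ?_
        · exact (mT.mul ((mG.div mfY).abs)).aestronglyMeasurable
        · exact Filter.Eventually.of_forall fun y => (e y).symm
      · filter_upwards [hCS] with y hy
        show ‖∫ x, ‖(h x * f x y) * ((∫ x, h x * f x y ∂μx) / fY y)‖ ∂μx‖
            ≤ ∫ x, h x ^ 2 * f x y ∂μx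
        have hT0 : 0 ≤ ∫ x, |h x| * f x y ∂μx :=
          integral_nonneg fun x => mul_nonneg (abs_nonneg _) (hf_nonneg x y)
        have hnn : 0 ≤ ∫ x, ‖(h x * f x y) * ((∫ x, h x * f x y ∂μx) / fY y)‖ ∂μx :=
          integral_nonneg fun x => norm_nonneg _
        rw [Real.norm_eq_abs, abs_of_nonneg hnn, e y]
        have hfy := hfY_pos y
        have h2 := hy.2
        have hGTy := hGT y
        rw [abs_div, abs_of_nonneg hfy.le, ← mul_div_assoc, div_le_iff₀ hfy]
        nlinarith [abs_nonneg (∫ x, h x * f x y ∂μx)]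
  -- integrability of Ξ(x,(x',y)) = (h x' f x' y) * (f x y / fY y) on the triple product
  have mΞ : AEStronglyMeasurable
      (fun r : X × (X × Y) => (h r.2.1 * f r.2.1 r.2.2) * (f r.1 r.2.2 / fY r.2.2))
      (μx.prod (μx.prod μy)) := by
    apply Measurable.aestronglyMeasurable
    have m1 : Measurable fun r : X × (X × Y) => h r.2.1 * f r.2.1 r.2.2 :=
      mψ1.comp measurable_snd
    have m2 : Measurable fun r : X × (X × Y) => f r.1 r.2.2 :=
      hf_meas'.comp (measurable_fst.prodMk (measurable_snd.snd))
    have m3 : Measurable fun r : X × (X × Y) => fY r.2.2 := mfY.comp measurable_snd.snd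
    exact m1.mul (m2.div m3)
  have hΞ : Integrable
      (fun r : X × (X × Y) => (h r.2.1 * f r.2.1 r.2.2) * (f r.1 r.2.2 / fY r.2.2))
      (μx.prod (μx.prod μy)) := by
    refine (integrable_prod_iff' mΞ).2 ⟨?_, ?_⟩
    · refine Filter.Eventually.of_forall fun p => ?_
      exact ((hfmx p.2).div_const (fY p.2)).const_mul (h p.1 * f p.1 p.2)
    · refine hψ1.norm.congr (Filter.Eventually.of_forall fun p => ?_)
      have e1 : ∀ x, ‖(h p.1 * f p.1 p.2) * (f x p.2 / fY p.2)‖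
          = ‖h p.1 * f p.1 p.2‖ * (f x p.2 / fY p.2) := fun x => by
        rw [norm_mul, Real.norm_eq_abs (f x p.2 / fY p.2),
          abs_of_nonneg (div_nonneg (hf_nonneg x p.2) (hfY_pos p.2).le)]
      calc ‖h p.1 * f p.1 p.2‖
          = ‖h p.1 * f p.1 p.2‖ * ((∫ x, f x p.2 ∂μx) / fY p.2) := by
            rw [← hfY p.2, div_self (hfY_pos p.2).ne', mul_one]
        _ = ∫ x, ‖h p.1 * f p.1 p.2‖ * (f x p.2 / fY p.2) ∂μx := by
            rw [← integral_div, ← integral_const_mul]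
        _ = ∫ x, ‖(h p.1 * f p.1 p.2) * (f x p.2 / fY p.2)‖ ∂μx :=
            integral_congr_ae (Filter.Eventually.of_forall fun x => (e1 x).symm)
  have hΘae : ∀ᵐ x ∂μx, Integrable
      (fun p : X × Y => (h p.1 * f p.1 p.2) * (f x p.2 / fY p.2)) (μx.prod μy) :=
    ((integrable_prod_iff mΞ).1 hΞ).1
  -- pointwise identity from the definition of q
  have A1 : ∀ x x', h x * h x' * q x x' * fX x'
      = h x * ∫ y, (h x' * f x' y) * (f x y / fY y) ∂μy := by
    intro x x'
    rw [hq x x']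
    have e1 : h x * h x' * (∫ y, (f x y / fY y) * (f x' y / fX x') ∂μy) * fX x'
        = ∫ y, (h x * h x' * fX x') * ((f x y / fY y) * (f x' y / fX x')) ∂μy := by
      rw [integral_const_mul]; ring
    rw [e1, ← integral_const_mul]
    refine integral_congr_ae (Filter.Eventually.of_forall fun y => ?_)
    show (h x * h x' * fX x') * ((f x y / fY y) * (f x' y / fX x'))
        = h x * ((h x' * f x' y) * (f x y / fY y))
    have hx' := (hfX_pos x').ne'
    have hy := (hfY_pos y).ne'
    field_simp
  -- inner Fubini (a.e. in x)
  have A2 : ∀ᵐ x ∂μx, (∫ x', ∫ y, (h x' * f x' y) * (f x y / fY y) ∂μy ∂μx)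
      = ∫ y, (∫ x', h x' * f x' y ∂μx) * (f x y / fY y) ∂μy := by
    filter_upwards [hΘae] with x hx
    rw [integral_integral_swap (f := fun x' y => (h x' * f x' y) * (f x y / fY y)) hx]
    refine integral_congr_ae (Filter.Eventually.of_forall fun y => ?_)
    show (∫ x', (h x' * f x' y) * (f x y / fY y) ∂μx)
        = (∫ x', h x' * f x' y ∂μx) * (f x y / fY y)
    rw [integral_mul_const]
  have A3 : ∫ x, (∫ x', h x * h x' * q x x' * fX x' ∂μx) ∂μx
      = ∫ x, ∫ y, (h x * f x y) * ((∫ x', h x' * f x' y ∂μx) / fY y) ∂μy ∂μx := by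
    refine integral_congr_ae ?_
    filter_upwards [A2] with x hx2
    calc ∫ x', h x * h x' * q x x' * fX x' ∂μx
        = ∫ x', h x * ∫ y, (h x' * f x' y) * (f x y / fY y) ∂μy ∂μx :=
          integral_congr_ae (Filter.Eventually.of_forall fun x' => A1 x x')
      _ = h x * ∫ x', ∫ y, (h x' * f x' y) * (f x y / fY y) ∂μy ∂μx :=
          integral_const_mul _ _
      _ = h x * ∫ y, (∫ x', h x' * f x' y ∂μx) * (f x y / fY y) ∂μy := by rw [hx2]
      _ = ∫ y, h x * ((∫ x', h x' * f x' y ∂μx) * (f x y / fY y)) ∂μy :=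
          (integral_const_mul _ _).symm
      _ = ∫ y, (h x * f x y) * ((∫ x', h x' * f x' y ∂μx) / fY y) ∂μy := by
          refine integral_congr_ae (Filter.Eventually.of_forall fun y => ?_)
          show h x * ((∫ x', h x' * f x' y ∂μx) * (f x y / fY y))
              = (h x * f x y) * ((∫ x', h x' * f x' y ∂μx) / fY y)
          ring
  -- outer Fubini
  have A4 : ∫ x, ∫ y, (h x * f x y) * ((∫ x', h x' * f x' y ∂μx) / fY y) ∂μy ∂μx
      = ∫ y, (∫ x, h x * f x y ∂μx) * ((∫ x', h x' * f x' y ∂μx) / fY y) ∂μy := by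
    rw [integral_integral_swap
      (f := fun x y => (h x * f x y) * ((∫ x', h x' * f x' y ∂μx) / fY y)) hΨ]
    refine integral_congr_ae (Filter.Eventually.of_forall fun y => ?_)
    show (∫ x, (h x * f x y) * ((∫ x', h x' * f x' y ∂μx) / fY y) ∂μx)
        = (∫ x, h x * f x y ∂μx) * ((∫ x', h x' * f x' y ∂μx) / fY y)
    rw [integral_mul_const]
  -- identification of the right-hand side
  have A5 : ∫ y, (∫ x, h x * (f x y / fY y) ∂μx) ^ 2 * fY y ∂μy
      = ∫ y, (∫ x, h x * f x y ∂μx) * ((∫ x', h x' * f x' y ∂μx) / fY y) ∂μy := by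
    refine integral_congr_ae (Filter.Eventually.of_forall fun y => ?_)
    show (∫ x, h x * (f x y / fY y) ∂μx) ^ 2 * fY y
        = (∫ x, h x * f x y ∂μx) * ((∫ x', h x' * f x' y ∂μx) / fY y)
    have e : ∫ x, h x * (f x y / fY y) ∂μx = (∫ x, h x * f x y ∂μx) / fY y := by
      rw [← integral_div]
      refine integral_congr_ae (Filter.Eventually.of_forall fun x => ?_)
      show h x * (f x y / fY y) = (h x * f x y) / fY y
      rw [mul_div_assoc]
    rw [e]
    have hy := (hfY_pos y).ne'
    field_simp
  constructor
  · rw [A3, A4, A5]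
  · rw [A5, ← hS_eq]
    refine integral_mono_ae ?_ hS_int ?_
    · refine Integrable.mono' hS_int
        ((mG.mul (mG.div mfY)).aestronglyMeasurable) ?_
      filter_upwards [hCS] with y hy
      show ‖(∫ x, h x * f x y ∂μx) * ((∫ x', h x' * f x' y ∂μx) / fY y)‖
          ≤ ∫ x, h x ^ 2 * f x y ∂μx
      have hfy := hfY_pos y
      have e : ‖(∫ x, h x * f x y ∂μx) * ((∫ x, h x * f x y ∂μx) / fY y)‖
          = (∫ x, h x * f x y ∂μx) ^ 2 / fY y := by
        rw [Real.norm_eq_abs, ← mul_div_assoc, abs_div, abs_of_nonneg hfy.le,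
          abs_mul_self, pow_two]
      rw [e, div_le_iff₀ hfy]
      exact hy.1
    · filter_upwards [hCS] with y hy
      have hfy := hfY_pos y
      show (∫ x, h x * f x y ∂μx) * ((∫ x', h x' * f x' y ∂μx) / fY y)
          ≤ ∫ x, h x ^ 2 * f x y ∂μx
      rw [← mul_div_assoc, ← pow_two, div_le_iff₀ hfy]
      exact hy.1

/-- Theorem 3 (operator-norm part, via inequality (7)): if the DA algorithms `q₁, q₂`
(with respect to joint densities `f*`, `f̃` having `x`-marginal `f_X`) satisfy the
covariance ordering `q₁ ⪰₁ q₂`, then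
`Var[E(h(X*)|Y*)] ≤ Var[E(h(X̃)|Ỹ)]` for every mean-zero square-integrable `h`, and the
corresponding suprema over `h` with `∫ h² f_X = 1`, `∫ h f_X = 0` (i.e. the squared maximal
correlations, hence the operator norms) satisfy the same inequality. -/
theorem da_norm_comparison
    {X Y : Type*}
    [MetricSpace X] [TopologicalSpace.SeparableSpace X] [LocallyCompactSpace X]
    [MeasurableSpace X] [BorelSpace X]
    [MetricSpace Y] [TopologicalSpace.SeparableSpace Y] [LocallyCompactSpace Y]
    [MeasurableSpace Y] [BorelSpace Y]
    (μx : Measure X) (μy : Measure Y) [SigmaFinite μx] [SigmaFinite μy]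
    (fX : X → ℝ) (hfX_meas : Measurable fX) (hfX_pos : ∀ x, 0 < fX x)
    (hfX_prob : ∫ x, fX x ∂μx = 1)
    (fstar ftilde : X → Y → ℝ)
    (hfstar_meas : Measurable (Function.uncurry fstar))
    (hftilde_meas : Measurable (Function.uncurry ftilde))
    (hfstar_nonneg : ∀ x y, 0 ≤ fstar x y)
    (hftilde_nonneg : ∀ x y, 0 ≤ ftilde x y)
    (hfstar_prob : ∫ q, fstar q.1 q.2 ∂(μx.prod μy) = 1)
    (hftilde_prob : ∫ q, ftilde q.1 q.2 ∂(μx.prod μy) = 1)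
    (hfstar_marg : ∀ x, ∫ y, fstar x y ∂μy = fX x)
    (hftilde_marg : ∀ x, ∫ y, ftilde x y ∂μy = fX x)
    (fstarY : Y → ℝ) (hfstarY : ∀ y, fstarY y = ∫ x, fstar x y ∂μx)
    (hfstarY_pos : ∀ y, 0 < fstarY y)
    (ftildeY : Y → ℝ) (hftildeY : ∀ y, ftildeY y = ∫ x, ftilde x y ∂μx)
    (hftildeY_pos : ∀ y, 0 < ftildeY y)
    (q₁ q₂ : X → X → ℝ)
    (hq₁ : ∀ x x', q₁ x x' = ∫ y, (fstar x y / fstarY y) * (fstar x' y / fX x') ∂μy)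
    (hq₂ : ∀ x x', q₂ x x' = ∫ y, (ftilde x y / ftildeY y) * (ftilde x' y / fX x') ∂μy)
    (hcov : ∀ h : X → ℝ, Measurable h →
      Integrable (fun x => h x ^ 2 * fX x) μx →
      (∫ x, h x * fX x ∂μx) = 0 →
      ∫ x, (∫ x', h x * h x' * q₁ x x' * fX x' ∂μx) ∂μx
        ≤ ∫ x, (∫ x', h x * h x' * q₂ x x' * fX x' ∂μx) ∂μx) :
    (∀ h : X → ℝ, Measurable h →
      Integrable (fun x => h x ^ 2 * fX x) μx →
      (∫ x, h x * fX x ∂μx) = 0 →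
      ∫ y, (∫ x, h x * (fstar x y / fstarY y) ∂μx) ^ 2 * fstarY y ∂μy
        ≤ ∫ y, (∫ x, h x * (ftilde x y / ftildeY y) ∂μx) ^ 2 * ftildeY y ∂μy) ∧
    sSup {v : ℝ | ∃ h : X → ℝ, Measurable h ∧
        (∫ x, h x ^ 2 * fX x ∂μx) = 1 ∧ (∫ x, h x * fX x ∂μx) = 0 ∧
        v = ∫ y, (∫ x, h x * (fstar x y / fstarY y) ∂μx) ^ 2 * fstarY y ∂μy}
      ≤ sSup {v : ℝ | ∃ h : X → ℝ, Measurable h ∧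
        (∫ x, h x ^ 2 * fX x ∂μx) = 1 ∧ (∫ x, h x * fX x ∂μx) = 0 ∧
        v = ∫ y, (∫ x, h x * (ftilde x y / ftildeY y) ∂μx) ^ 2 * ftildeY y ∂μy} := by
  have K1 := fun (h : X → ℝ) (hm : Measurable h)
      (h2 : Integrable (fun x => h x ^ 2 * fX x) μx) =>
    da_key μx μy fX hfX_pos fstar hfstar_meas hfstar_nonneg hfstar_prob hfstar_marg
      fstarY hfstarY hfstarY_pos q₁ hq₁ h hm h2
  have K2 := fun (h : X → ℝ) (hm : Measurable h)
      (h2 : Integrable (fun x => h x ^ 2 * fX x) μx) =>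
    da_key μx μy fX hfX_pos ftilde hftilde_meas hftilde_nonneg hftilde_prob hftilde_marg
      ftildeY hftildeY hftildeY_pos q₂ hq₂ h hm h2
  have part1 : ∀ h : X → ℝ, Measurable h →
      Integrable (fun x => h x ^ 2 * fX x) μx →
      (∫ x, h x * fX x ∂μx) = 0 →
      ∫ y, (∫ x, h x * (fstar x y / fstarY y) ∂μx) ^ 2 * fstarY y ∂μy
        ≤ ∫ y, (∫ x, h x * (ftilde x y / ftildeY y) ∂μx) ^ 2 * ftildeY y ∂μy := by
    intro h hm h2 h0
    calc ∫ y, (∫ x, h x * (fstar x y / fstarY y) ∂μx) ^ 2 * fstarY y ∂μy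
        = ∫ x, (∫ x', h x * h x' * q₁ x x' * fX x' ∂μx) ∂μx := ((K1 h hm h2).1).symm
      _ ≤ ∫ x, (∫ x', h x * h x' * q₂ x x' * fX x' ∂μx) ∂μx := hcov h hm h2 h0
      _ = ∫ y, (∫ x, h x * (ftilde x y / ftildeY y) ∂μx) ^ 2 * ftildeY y ∂μy :=
          (K2 h hm h2).1
  refine ⟨part1, ?_⟩
  by_cases hne : ∃ h : X → ℝ, Measurable h ∧
      (∫ x, h x ^ 2 * fX x ∂μx) = 1 ∧ (∫ x, h x * fX x ∂μx) = 0
  · have hTbdd : BddAbove {v : ℝ | ∃ h : X → ℝ, Measurable h ∧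
        (∫ x, h x ^ 2 * fX x ∂μx) = 1 ∧ (∫ x, h x * fX x ∂μx) = 0 ∧
        v = ∫ y, (∫ x, h x * (ftilde x y / ftildeY y) ∂μx) ^ 2 * ftildeY y ∂μy} := by
      refine ⟨1, ?_⟩
      rintro w ⟨g, gm, g1, g0, rfl⟩
      have g2 : Integrable (fun x => g x ^ 2 * fX x) μx :=
        integrable_of_pos_integral (by rw [g1]; norm_num)
      have hb := (K2 g gm g2).2
      rw [g1] at hb
      exact hb
    obtain ⟨h₀, hm₀, h1₀, h0₀⟩ := hne
    refine csSup_le ⟨_, ⟨h₀, hm₀, h1₀, h0₀, rfl⟩⟩ ?_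
    rintro v ⟨h, hm, h1, h0, rfl⟩
    have h2 : Integrable (fun x => h x ^ 2 * fX x) μx :=
      integrable_of_pos_integral (by rw [h1]; norm_num)
    exact le_trans (part1 h hm h2 h0) (le_csSup hTbdd ⟨h, hm, h1, h0, rfl⟩)
  · have e1 : {v : ℝ | ∃ h : X → ℝ, Measurable h ∧
        (∫ x, h x ^ 2 * fX x ∂μx) = 1 ∧ (∫ x, h x * fX x ∂μx) = 0 ∧
        v = ∫ y, (∫ x, h x * (fstar x y / fstarY y) ∂μx) ^ 2 * fstarY y ∂μy} = ∅ :=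
      Set.eq_empty_iff_forall_notMem.2 (by
        rintro v ⟨h, hm, h1, h0, _⟩; exact hne ⟨h, hm, h1, h0⟩)
    have e2 : {v : ℝ | ∃ h : X → ℝ, Measurable h ∧
        (∫ x, h x ^ 2 * fX x ∂μx) = 1 ∧ (∫ x, h x * fX x ∂μx) = 0 ∧
        v = ∫ y, (∫ x, h x * (ftilde x y / ftildeY y) ∂μx) ^ 2 * ftildeY y ∂μy} = ∅ :=
      Set.eq_empty_iff_forall_notMem.2 (by
        rintro v ⟨h, hm, h1, h0, _⟩; exact hne ⟨h, hm, h1, h0⟩)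
    rw [e1, e2, Real.sSup_empty]
end

section
/- (Proposition 1.) Suppose R^{1/2}(y,dy') is a Markov transition kernel on Y that is reversible with respect to f_Y (i.e. ∫_A R^{1/2}(y,B) f_Y(y) μ_y(dy) = ∫_B R^{1/2}(y,A) f_Y(y) μ_y(dy) for all measurable A, B) and that R(y,A) = ∫_Y R^{1/2}(w,A) R^{1/2}(y,dw) for all y and measurable A. Define f*(x,y) = f_Y(y) ∫_Y f_{X|Y}(x|y') R^{1/2}(y,dy'). Then: (i) ∫_Y f*(x,y) μ_y(dy) = f_X(x) for all x; (ii) ∫_X f*(x,y) μ_x(dx) = f_Y(y) for all y; and (iii) ∫_Y [f*(x,y)/f_Y(y)][f*(x',y)/f_X(x')] μ_y(dy) = p_R(x|x') for all x, x'. That is, p_R is a DA algorithm with respect to f*. -/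
open MeasureTheory ProbabilityTheory
open scoped ENNReal

/-- Proposition 1: if `R = R^{1/2} ∘ R^{1/2}` with `R^{1/2}` reversible with respect to
`f_Y`, then `p_R` is a DA algorithm with respect to
`f*(x,y) = f_Y(y) ∫_Y f_{X|Y}(x|y') R^{1/2}(y,dy')`. -/
theorem pR_is_da_algorithm
    {X Y : Type*}
    [MetricSpace X] [TopologicalSpace.SeparableSpace X] [LocallyCompactSpace X]
    [MeasurableSpace X] [BorelSpace X]
    [MetricSpace Y] [TopologicalSpace.SeparableSpace Y] [LocallyCompactSpace Y]
    [MeasurableSpace Y] [BorelSpace Y]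
    (μx : Measure X) (μy : Measure Y) [SigmaFinite μx] [SigmaFinite μy]
    (f : X → Y → ℝ)
    (hf_meas : Measurable (Function.uncurry f))
    (hf_nonneg : ∀ x y, 0 ≤ f x y)
    (hf_prob : ∫ q, f q.1 q.2 ∂(μx.prod μy) = 1)
    (fX : X → ℝ) (hfX : ∀ x, fX x = ∫ y, f x y ∂μy)
    (fY : Y → ℝ) (hfY : ∀ y, fY y = ∫ x, f x y ∂μx)
    (hfX_pos : ∀ x, 0 < fX x) (hfY_pos : ∀ y, 0 < fY y)
    (fXY : X → Y → ℝ) (hfXY : ∀ x y, fXY x y = f x y / fY y)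
    (fYX : Y → X → ℝ) (hfYX : ∀ y x, fYX y x = f x y / fX x)
    (Rhalf : Kernel Y Y) [IsMarkovKernel Rhalf]
    (hRhalf_rev : ∀ A B : Set Y, MeasurableSet A → MeasurableSet B →
      ∫ y in A, ((Rhalf y) B).toReal * fY y ∂μy
        = ∫ y in B, ((Rhalf y) A).toReal * fY y ∂μy)
    (R : Kernel Y Y) [IsMarkovKernel R]
    (hR : ∀ (y : Y) (A : Set Y), MeasurableSet A →
      (R y) A = ∫⁻ w, (Rhalf w) A ∂(Rhalf y))
    (pR : X → X → ℝ)
    (hpR : ∀ x x', pR x x' = ∫ y, (∫ y', fXY x y' ∂(R y)) * fYX y x' ∂μy)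
    (fstar : X → Y → ℝ)
    (hfstar : ∀ x y, fstar x y = fY y * ∫ y', fXY x y' ∂(Rhalf y)) :
    (∀ x, ∫ y, fstar x y ∂μy = fX x) ∧
    (∀ y, ∫ x, fstar x y ∂μx = fY y) ∧
    (∀ x x', ∫ y, (fstar x y / fY y) * (fstar x' y / fX x') ∂μy = pR x x') := by
  classical
  -- measurability facts
  have hfY_meas : Measurable fY := by
    have h : fY = fun y => ∫ x, f x y ∂μx := funext hfY
    rw [h]
    exact hf_meas.stronglyMeasurable.integral_prod_left.measurable
  have hfx_meas : ∀ x, Measurable (f x) := fun x => hf_meas.of_uncurry_left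
  have hfy_meas : ∀ y, Measurable fun x => f x y := fun y =>
    hf_meas.comp (measurable_id.prodMk measurable_const)
  have huXY : Measurable (Function.uncurry fXY) := by
    have h : Function.uncurry fXY = fun q : X × Y => f q.1 q.2 / fY q.2 := by
      funext q; exact hfXY q.1 q.2
    rw [h]
    exact hf_meas.div (hfY_meas.comp measurable_snd)
  have hfXY_meas : ∀ x, Measurable (fXY x) := fun x => huXY.of_uncurry_left
  have hfXY_nonneg : ∀ x y, 0 ≤ fXY x y := fun x y => by
    rw [hfXY]; exact div_nonneg (hf_nonneg x y) (hfY_pos y).le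
  -- integrability facts
  have hf_int : Integrable (fun q : X × Y => f q.1 q.2) (μx.prod μy) := by
    by_contra h
    rw [integral_undef h] at hf_prob; norm_num at hf_prob
  have hfx_int : ∀ x, Integrable (f x) μy := by
    intro x; by_contra h
    have hp := hfX_pos x
    rw [hfX, integral_undef h] at hp; exact lt_irrefl _ hp
  have hfy_int : ∀ y, Integrable (fun x => f x y) μx := by
    intro y; by_contra h
    have hp := hfY_pos y
    rw [hfY, integral_undef h] at hp; exact lt_irrefl _ hp
  have hfY_int : Integrable fY μy := by
    have h : fY = fun y => ∫ x, f x y ∂μx := funext hfY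
    rw [h]
    exact hf_int.integral_prod_right
  have hfY_one : ∫ y, fY y ∂μy = 1 := by
    calc ∫ y, fY y ∂μy = ∫ y, ∫ x, f x y ∂μx ∂μy := by simp_rw [hfY]
    _ = ∫ q, f q.1 q.2 ∂(μx.prod μy) :=
      (integral_prod_symm (fun q : X × Y => f q.1 q.2) hf_int).symm
    _ = 1 := hf_prob
  -- the measure ν with density fY
  set ν : Measure Y := μy.withDensity (fun y => ENNReal.ofReal (fY y)) with hνdef
  have hfY_ofReal_meas : Measurable fun y => ENNReal.ofReal (fY y) := hfY_meas.ennreal_ofReal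
  haveI hν_prob : IsProbabilityMeasure ν := by
    constructor
    rw [hνdef, withDensity_apply _ MeasurableSet.univ, setLIntegral_univ,
      ← ofReal_integral_eq_lintegral_ofReal hfY_int
        (Filter.Eventually.of_forall fun y => (hfY_pos y).le),
      hfY_one, ENNReal.ofReal_one]
  have hν_lint : ∀ (g : Y → ℝ≥0∞), Measurable g →
      ∫⁻ y, g y ∂ν = ∫⁻ y, ENNReal.ofReal (fY y) * g y ∂μy := by
    intro g hg
    rw [hνdef, lintegral_withDensity_eq_lintegral_mul _ hfY_ofReal_meas hg]
    rfl
  have hac : μy ≪ ν :=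
    withDensity_absolutelyContinuous' hfY_ofReal_meas.aemeasurable
      (Filter.Eventually.of_forall fun y => by
        simp [ENNReal.ofReal_eq_zero, not_le, hfY_pos y])
  -- reversibility at the level of sets, in lintegral form
  have hrev_set : ∀ A B : Set Y, MeasurableSet A → MeasurableSet B →
      ∫⁻ y in A, Rhalf y B ∂ν = ∫⁻ y in B, Rhalf y A ∂ν := by
    have key : ∀ (C D : Set Y), MeasurableSet C → MeasurableSet D →
        ∫ y in C, ((Rhalf y) D).toReal * fY y ∂μy = (∫⁻ y in C, Rhalf y D ∂ν).toReal := by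
      intro C D hC hD
      rw [integral_eq_lintegral_of_nonneg_ae
        (Filter.Eventually.of_forall fun y => mul_nonneg ENNReal.toReal_nonneg (hfY_pos y).le)
        ((Rhalf.measurable_coe hD).ennreal_toReal.mul hfY_meas).aestronglyMeasurable]
      congr 1
      rw [hνdef, setLIntegral_withDensity_eq_setLIntegral_mul _ hfY_ofReal_meas
        (Rhalf.measurable_coe hD) hC]
      refine setLIntegral_congr_fun hC (fun y _ => ?_)
      rw [ENNReal.ofReal_mul ENNReal.toReal_nonneg,
        ENNReal.ofReal_toReal (measure_ne_top _ _), Pi.mul_apply, mul_comm]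
    have hfin : ∀ (C D : Set Y), ∫⁻ y in C, Rhalf y D ∂ν ≠ ⊤ := by
      intro C D
      have h1 : ∫⁻ y in C, Rhalf y D ∂ν ≤ ν C := by
        calc ∫⁻ y in C, Rhalf y D ∂ν ≤ ∫⁻ _ in C, 1 ∂ν :=
          lintegral_mono fun y => prob_le_one
        _ = ν C := setLIntegral_one C
      exact ne_of_lt (lt_of_le_of_lt h1 (lt_of_le_of_lt prob_le_one ENNReal.one_lt_top))
    intro A B hA hB
    have h := hRhalf_rev A B hA hB
    rw [key A B hA hB, key B A hB hA] at h
    exact (ENNReal.toReal_eq_toReal_iff' (hfin A B) (hfin B A)).mp h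
  -- the composition-product measure is symmetric
  set m : Measure (Y × Y) := ν ⊗ₘ Rhalf with hm
  haveI hm_prob : IsProbabilityMeasure m := by
    constructor
    rw [hm, Measure.compProd_apply_univ]
    exact measure_univ
  haveI hswap_prob : IsProbabilityMeasure (m.map Prod.swap) := by
    constructor
    rw [Measure.map_apply measurable_swap MeasurableSet.univ, Set.preimage_univ]
    exact measure_univ
  have hm_symm : m.map Prod.swap = m := by
    refine ext_of_generate_finite _ generateFrom_prod.symm isPiSystem_prod ?_ ?_
    · rintro s ⟨A, hA, B, hB, rfl⟩
      rw [Measure.map_apply measurable_swap ((hA : MeasurableSet A).prod hB),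
        Set.preimage_swap_prod, hm, Measure.compProd_apply_prod hB hA,
        Measure.compProd_apply_prod hA hB]
      exact hrev_set B A hB hA
    · rw [measure_univ, measure_univ]
  -- reversibility for functions
  have hrev : ∀ (g h : Y → ℝ≥0∞), Measurable g → Measurable h →
      ∫⁻ y, g y * ∫⁻ w, h w ∂(Rhalf y) ∂ν = ∫⁻ y, h y * ∫⁻ w, g w ∂(Rhalf y) ∂ν := by
    intro g h hg hh
    have hmeas : Measurable fun p : Y × Y => g p.1 * h p.2 :=
      (hg.comp measurable_fst).mul (hh.comp measurable_snd)
    have hmeas' : Measurable fun p : Y × Y => h p.1 * g p.2 :=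
      (hh.comp measurable_fst).mul (hg.comp measurable_snd)
    have e1 : ∫⁻ p : Y × Y, g p.1 * h p.2 ∂m = ∫⁻ y, g y * ∫⁻ w, h w ∂(Rhalf y) ∂ν := by
      rw [hm, Measure.lintegral_compProd hmeas]
      refine lintegral_congr fun y => ?_
      show ∫⁻ b, g y * h b ∂(Rhalf y) = g y * ∫⁻ w, h w ∂(Rhalf y)
      exact lintegral_const_mul _ hh
    have e2 : ∫⁻ p : Y × Y, h p.1 * g p.2 ∂m = ∫⁻ y, h y * ∫⁻ w, g w ∂(Rhalf y) ∂ν := by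
      rw [hm, Measure.lintegral_compProd hmeas']
      refine lintegral_congr fun y => ?_
      show ∫⁻ b, h y * g b ∂(Rhalf y) = h y * ∫⁻ w, g w ∂(Rhalf y)
      exact lintegral_const_mul _ hg
    have e3 : ∫⁻ p : Y × Y, g p.1 * h p.2 ∂m = ∫⁻ p : Y × Y, h p.1 * g p.2 ∂m := by
      conv_lhs => rw [← hm_symm]
      rw [lintegral_map hmeas measurable_swap]
      exact lintegral_congr fun p => by simp [mul_comm]
    rw [← e1, e3, e2]
  -- invariance of ν under Rhalf
  have hinv : ∀ (h : Y → ℝ≥0∞), Measurable h →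
      ∫⁻ y, ∫⁻ w, h w ∂(Rhalf y) ∂ν = ∫⁻ y, h y ∂ν := by
    intro h hh
    have h1 := hrev (fun _ => 1) h measurable_const hh
    simpa [lintegral_one, measure_univ] using h1
  -- R as the two-step composition of Rhalf
  have hRb : ∀ (h : Y → ℝ≥0∞), Measurable h → ∀ y,
      ∫⁻ w, h w ∂(R y) = ∫⁻ y', ∫⁻ w, h w ∂(Rhalf y') ∂(Rhalf y) := by
    intro h hh y
    have hbind : (R y : Measure Y) = Measure.bind (Rhalf y) (fun w => Rhalf w) := by
      ext A hA
      rw [Measure.bind_apply hA Rhalf.measurable.aemeasurable]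
      exact hR y A hA
    rw [hbind, Measure.lintegral_bind Rhalf.measurable.aemeasurable hh.aemeasurable]
  -- the key lintegral quantities
  set gg : X → Y → ℝ≥0∞ := fun x y => ENNReal.ofReal (fXY x y) with hggdef
  have hgg_meas : ∀ x, Measurable (gg x) := fun x => (hfXY_meas x).ennreal_ofReal
  have hugg : Measurable (Function.uncurry gg) := huXY.ennreal_ofReal
  set L : X → Y → ℝ≥0∞ := fun x y => ∫⁻ y', gg x y' ∂(Rhalf y) with hLdef
  have hL_meas : ∀ x, Measurable (L x) := fun x => (hgg_meas x).lintegral_kernel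
  set LR : X → Y → ℝ≥0∞ := fun x y => ∫⁻ y', gg x y' ∂(R y) with hLRdef
  have hLR_meas : ∀ x, Measurable (LR x) := fun x => (hgg_meas x).lintegral_kernel
  have hLR_eq : ∀ x y, LR x y = ∫⁻ w, L x w ∂(Rhalf y) := fun x y => hRb (gg x) (hgg_meas x) y
  have hkey : ∀ x y, ENNReal.ofReal (fY y) * gg x y = ENNReal.ofReal (f x y) := by
    intro x y
    have h1 : fY y * fXY x y = f x y := by
      rw [hfXY, mul_comm]
      exact div_mul_cancel₀ _ (hfY_pos y).ne'
    rw [hggdef, ← ENNReal.ofReal_mul (hfY_pos y).le, h1]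
  have hK1 : ∀ x, ∫⁻ y, gg x y ∂ν = ENNReal.ofReal (fX x) := by
    intro x
    rw [hν_lint (gg x) (hgg_meas x)]
    calc ∫⁻ y, ENNReal.ofReal (fY y) * gg x y ∂μy = ∫⁻ y, ENNReal.ofReal (f x y) ∂μy :=
      lintegral_congr fun y => hkey x y
    _ = ENNReal.ofReal (∫ y, f x y ∂μy) :=
      (ofReal_integral_eq_lintegral_ofReal (hfx_int x)
        (Filter.Eventually.of_forall fun y => hf_nonneg x y)).symm
    _ = ENNReal.ofReal (fX x) := by rw [hfX]
  have hK2 : ∀ x, ∫⁻ y, L x y ∂ν = ENNReal.ofReal (fX x) := fun x =>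
    (hinv (gg x) (hgg_meas x)).trans (hK1 x)
  have haeL : ∀ x, ∀ᵐ y ∂μy, L x y ≠ ⊤ := by
    intro x
    have h1 : ∀ᵐ y ∂ν, L x y ≠ ⊤ := by
      refine (ae_lt_top (hL_meas x) ?_).mono fun y hy => hy.ne
      rw [hK2 x]; exact ENNReal.ofReal_ne_top
    exact hac.ae_le h1
  have hKR : ∀ x, ∫⁻ y, LR x y ∂ν = ENNReal.ofReal (fX x) := by
    intro x
    calc ∫⁻ y, LR x y ∂ν = ∫⁻ y, ∫⁻ w, L x w ∂(Rhalf y) ∂ν := lintegral_congr fun y => hLR_eq x y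
    _ = ∫⁻ y, L x y ∂ν := hinv (L x) (hL_meas x)
    _ = ENNReal.ofReal (fX x) := hK2 x
  have haeLR : ∀ x, ∀ᵐ y ∂μy, LR x y ≠ ⊤ := by
    intro x
    have h1 : ∀ᵐ y ∂ν, LR x y ≠ ⊤ := by
      refine (ae_lt_top (hLR_meas x) ?_).mono fun y hy => hy.ne
      rw [hKR x]; exact ENNReal.ofReal_ne_top
    exact hac.ae_le h1
  -- Bochner integrals against the kernels
  have hB1 : ∀ x y, ∫ y', fXY x y' ∂(Rhalf y) = (L x y).toReal := by
    intro x y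
    rw [integral_eq_lintegral_of_nonneg_ae
      (Filter.Eventually.of_forall fun y' => hfXY_nonneg x y')
      (hfXY_meas x).aestronglyMeasurable]
  have hBR : ∀ x y, ∫ y', fXY x y' ∂(R y) = (LR x y).toReal := by
    intro x y
    rw [integral_eq_lintegral_of_nonneg_ae
      (Filter.Eventually.of_forall fun y' => hfXY_nonneg x y')
      (hfXY_meas x).aestronglyMeasurable]
  have hfstar' : ∀ x y, fstar x y = fY y * (L x y).toReal := by
    intro x y
    rw [hfstar, hB1]
  refine ⟨?_, ?_, ?_⟩
  · -- (i)
    intro x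
    have hmeas : AEStronglyMeasurable (fun y => fY y * (L x y).toReal) μy :=
      (hfY_meas.mul (hL_meas x).ennreal_toReal).aestronglyMeasurable
    calc ∫ y, fstar x y ∂μy = ∫ y, fY y * (L x y).toReal ∂μy := by simp_rw [hfstar']
    _ = (∫⁻ y, ENNReal.ofReal (fY y * (L x y).toReal) ∂μy).toReal :=
      integral_eq_lintegral_of_nonneg_ae
        (Filter.Eventually.of_forall fun y => mul_nonneg (hfY_pos y).le ENNReal.toReal_nonneg)
        hmeas
    _ = (∫⁻ y, ENNReal.ofReal (fY y) * L x y ∂μy).toReal := by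
      congr 1
      refine lintegral_congr_ae ((haeL x).mono fun y hy => ?_)
      beta_reduce
      rw [ENNReal.ofReal_mul (hfY_pos y).le, ENNReal.ofReal_toReal hy]
    _ = (∫⁻ y, L x y ∂ν).toReal := by rw [hν_lint (L x) (hL_meas x)]
    _ = fX x := by rw [hK2 x, ENNReal.toReal_ofReal (hfX_pos x).le]
  · -- (ii)
    intro y
    have hLy_meas : Measurable fun x => L x y :=
      Measurable.lintegral_prod_right (f := gg) hugg
    have hT : ∫⁻ x, L x y ∂μx = 1 := by
      calc ∫⁻ x, L x y ∂μx = ∫⁻ y', ∫⁻ x, gg x y' ∂μx ∂(Rhalf y) :=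
        lintegral_lintegral_swap hugg.aemeasurable
      _ = ∫⁻ y', (1 : ℝ≥0∞) ∂(Rhalf y) := by
        refine lintegral_congr fun y' => ?_
        have h1 : ∫⁻ x, ENNReal.ofReal (f x y') ∂μx = ENNReal.ofReal (fY y') := by
          rw [← ofReal_integral_eq_lintegral_ofReal (hfy_int y')
            (Filter.Eventually.of_forall fun x => hf_nonneg x y'), hfY]
        have h2 : (fun x => gg x y')
            = fun x => ENNReal.ofReal (f x y') * ENNReal.ofReal ((fY y')⁻¹) := by
          funext x
          rw [hggdef]
          simp only
          rw [hfXY, div_eq_mul_inv, ENNReal.ofReal_mul (hf_nonneg x y')]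
        rw [h2, lintegral_mul_const _ ((hfy_meas y').ennreal_ofReal), h1,
          ← ENNReal.ofReal_mul (hfY_pos y').le, mul_inv_cancel₀ (hfY_pos y').ne',
          ENNReal.ofReal_one]
      _ = 1 := by simp
    have haeLy : ∀ᵐ x ∂μx, L x y ≠ ⊤ :=
      (ae_lt_top hLy_meas (by rw [hT]; exact ENNReal.one_ne_top)).mono fun x hx => hx.ne
    have hone : ∫ x, (L x y).toReal ∂μx = 1 := by
      rw [integral_eq_lintegral_of_nonneg_ae
        (Filter.Eventually.of_forall fun x => ENNReal.toReal_nonneg)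
        hLy_meas.ennreal_toReal.aestronglyMeasurable,
        lintegral_congr_ae (haeLy.mono fun x hx => ENNReal.ofReal_toReal hx), hT,
        ENNReal.toReal_one]
    calc ∫ x, fstar x y ∂μx = ∫ x, fY y * (L x y).toReal ∂μx := by simp_rw [hfstar']
    _ = fY y * ∫ x, (L x y).toReal ∂μx := integral_const_mul _ _
    _ = fY y := by rw [hone, mul_one]
  · -- (iii)
    intro x x'
    have hint_eq : ∀ᵐ y ∂μy, (fstar x y / fY y) * (fstar x' y / fX x')
        = (L x y).toReal * (L x' y).toReal * fY y / fX x' := by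
      refine Filter.Eventually.of_forall fun y => ?_
      rw [hfstar', hfstar', mul_div_cancel_left₀ _ (hfY_pos y).ne']
      ring
    have hφmeas : AEStronglyMeasurable (fun y => (L x y).toReal * (L x' y).toReal * fY y) μy :=
      (((hL_meas x).ennreal_toReal.mul (hL_meas x').ennreal_toReal).mul
        hfY_meas).aestronglyMeasurable
    have hNlhs : ∫ y, (L x y).toReal * (L x' y).toReal * fY y ∂μy
        = (∫⁻ y, L x y * (L x' y * ENNReal.ofReal (fY y)) ∂μy).toReal := by
      rw [integral_eq_lintegral_of_nonneg_ae
        (Filter.Eventually.of_forall fun y =>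
          mul_nonneg (mul_nonneg ENNReal.toReal_nonneg ENNReal.toReal_nonneg) (hfY_pos y).le)
        hφmeas]
      congr 1
      refine lintegral_congr_ae (((haeL x).and (haeL x')).mono fun y hy => ?_)
      beta_reduce
      rw [ENNReal.ofReal_mul (mul_nonneg ENNReal.toReal_nonneg ENNReal.toReal_nonneg),
        ENNReal.ofReal_mul ENNReal.toReal_nonneg, ENNReal.ofReal_toReal hy.1,
        ENNReal.ofReal_toReal hy.2, mul_assoc]
    have hstep : ∫⁻ y, L x y * (L x' y * ENNReal.ofReal (fY y)) ∂μy
        = ∫⁻ y, L x y * L x' y ∂ν := by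
      rw [hν_lint (fun y => L x y * L x' y) ((hL_meas x).mul (hL_meas x'))]
      exact lintegral_congr fun y => by ring
    have hstep2 : ∫⁻ y, L x y * L x' y ∂ν = ∫⁻ y, gg x' y * LR x y ∂ν := by
      have h := hrev (L x) (gg x') (hL_meas x) (hgg_meas x')
      calc ∫⁻ y, L x y * L x' y ∂ν = ∫⁻ y, L x y * ∫⁻ w, gg x' w ∂(Rhalf y) ∂ν := rfl
      _ = ∫⁻ y, gg x' y * ∫⁻ w, L x w ∂(Rhalf y) ∂ν := h
      _ = ∫⁻ y, gg x' y * LR x y ∂ν := lintegral_congr fun y => by rw [hLR_eq]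
    have hstep3 : ∫⁻ y, gg x' y * LR x y ∂ν = ∫⁻ y, ENNReal.ofReal (f x' y) * LR x y ∂μy := by
      rw [hν_lint (fun y => gg x' y * LR x y) ((hgg_meas x').mul (hLR_meas x))]
      refine lintegral_congr fun y => ?_
      rw [← mul_assoc, hkey x' y]
    have hrhs : pR x x' = (∫⁻ y, ENNReal.ofReal (f x' y) * LR x y ∂μy).toReal / fX x' := by
      rw [hpR]
      have h : ∀ y, (∫ y', fXY x y' ∂(R y)) * fYX y x' = (LR x y).toReal * f x' y / fX x' := by
        intro y; rw [hBR, hfYX]; ring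
      simp_rw [h]
      rw [integral_div]
      congr 1
      rw [integral_eq_lintegral_of_nonneg_ae
        (Filter.Eventually.of_forall fun y =>
          mul_nonneg ENNReal.toReal_nonneg (hf_nonneg x' y))
        ((hLR_meas x).ennreal_toReal.mul (hfx_meas x')).aestronglyMeasurable]
      congr 1
      refine lintegral_congr_ae ((haeLR x).mono fun y hy => ?_)
      beta_reduce
      rw [ENNReal.ofReal_mul ENNReal.toReal_nonneg, ENNReal.ofReal_toReal hy, mul_comm]
    rw [integral_congr_ae hint_eq, integral_div, hNlhs, hstep, hstep2, hstep3, hrhs]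
end
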